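/- arXiv:1501.00739 — 5 statements merged into one kernel-verified Lean document; each statement's English description precedes it below -/
import Mathlib

section
/- All moments of the dominating width variable are finite (the probabilistic core of Proposition 2): Let K > 0, let w₀ be a positive integer, and let (U_n)_{n≥1} be independent random variables with U_n exponentially distributed with mean 1/(K(w₀+n)). For t > 0 define τ(t) = inf{n ≥ 1 : U₁ + ⋯ + U_n ≥ t} and Q(t) = w₀ + τ(t). Then τ(t) is almost surely finite and E[Q(t)^r] < ∞ for every real r > 0 and every t > 0. -/
set_option maxHeartbeats 1000000

open MeasureTheory ProbabilityTheory Real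

private lemma my_iIndep_ae_eq {Ω : Type*} [MeasurableSpace Ω] {μ : Measure Ω}
    {f g : ℕ → Ω → ℝ} (hf : iIndepFun f μ)
    (h : ∀ i, f i =ᵐ[μ] g i) :
    iIndepFun g μ := by
  rw [iIndepFun_iff_measure_inter_preimage_eq_mul] at hf ⊢
  intro S sets hsets
  have hae : ∀ᵐ ω ∂μ, ∀ i, f i ω = g i ω := ae_all_iff.2 h
  have h1 : μ (⋂ i ∈ S, g i ⁻¹' sets i) = μ (⋂ i ∈ S, f i ⁻¹' sets i) := by
    apply measure_congr
    filter_upwards [hae] with ω hω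
    have : (ω ∈ ⋂ i ∈ S, g i ⁻¹' sets i) ↔ (ω ∈ ⋂ i ∈ S, f i ⁻¹' sets i) := by
      simp only [Set.mem_iInter, Set.mem_preimage]
      exact ⟨fun h' i hi => by rw [hω i]; exact h' i hi,
             fun h' i hi => by rw [← hω i]; exact h' i hi⟩
    exact eq_iff_iff.2 this
  have h2 : ∀ i, μ (g i ⁻¹' sets i) = μ (f i ⁻¹' sets i) := by
    intro i
    apply measure_congr
    filter_upwards [h i] with ω hω
    have : (ω ∈ g i ⁻¹' sets i) ↔ (ω ∈ f i ⁻¹' sets i) := by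
      simp only [Set.mem_preimage, hω]
    exact eq_iff_iff.2 this
  rw [h1, hf S hsets]
  exact Finset.prod_congr rfl fun i _ => (h2 i).symm

private lemma my_iIndep_shift {Ω : Type*} [MeasurableSpace Ω] {μ : Measure Ω}
    (U : ℕ → Ω → ℝ) (h : iIndepFun U μ) :
    iIndepFun (fun j => U (j + 1)) μ := by
  rw [iIndepFun_iff_measure_inter_preimage_eq_mul] at h ⊢
  intro S sets hsets
  have key := h (S.map ⟨fun j => j + 1, add_left_injective 1⟩)
    (sets := fun i => sets (i - 1)) ?_
  · calc μ (⋂ j ∈ S, (fun j => U (j + 1)) j ⁻¹' sets j)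
        = μ (⋂ i ∈ S.map ⟨fun j => j + 1, add_left_injective 1⟩, U i ⁻¹' sets (i - 1)) := by
          congr 1; ext ω; simp [Finset.mem_map]
      _ = ∏ i ∈ S.map ⟨fun j => j + 1, add_left_injective 1⟩, μ (U i ⁻¹' sets (i - 1)) := key
      _ = ∏ j ∈ S, μ ((fun j => U (j + 1)) j ⁻¹' sets j) := by
          rw [Finset.prod_map]; exact Finset.prod_congr rfl fun j _ => by simp
  · intro i hi
    simp only [Finset.mem_map, Function.Embedding.coeFn_mk] at hi
    obtain ⟨j, hj, rfl⟩ := hi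
    simpa using hsets j hj

private lemma my_prod_shift (c : ℝ) (hc : 0 < c) (L n : ℕ) :
    ∏ j ∈ Finset.range n, (c + j) / (c + L + j)
      = ∏ i ∈ Finset.range L, (c + i) / (c + n + i) := by
  rw [Finset.prod_div_distrib, Finset.prod_div_distrib]
  rw [div_eq_div_iff]
  · have e1 : (∏ j ∈ Finset.range n, (c + (j:ℝ))) * ∏ i ∈ Finset.range L, (c + ↑n + (i:ℝ))
        = ∏ m ∈ Finset.range (n + L), (c + (m:ℝ)) := by
      rw [Finset.prod_range_add]
      congr 1
      exact Finset.prod_congr rfl fun i _ => by push_cast; ring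
    have e2 : ∏ m ∈ Finset.range (L + n), (c + (m:ℝ))
        = (∏ i ∈ Finset.range L, (c + (i:ℝ))) * ∏ j ∈ Finset.range n, (c + ↑L + (j:ℝ)) := by
      rw [Finset.prod_range_add]
      congr 1
      exact Finset.prod_congr rfl fun i _ => by push_cast; ring
    rw [e1, add_comm n L, e2]
  · exact ne_of_gt (Finset.prod_pos fun j _ => by positivity)
  · exact ne_of_gt (Finset.prod_pos fun j _ => by positivity)

private lemma my_integral_exp_expMeasure {ρ s : ℝ} (hρ : 0 < ρ) (hs : s ≤ 0) :
    ∫ x, Real.exp (s * x) ∂(expMeasure ρ) = ρ / (ρ - s) := by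
  have hρs : 0 < ρ - s := by linarith
  have hpdf : ∀ x : ℝ, exponentialPDFReal ρ x = if 0 ≤ x then ρ * rexp (-(ρ * x)) else 0 := by
    intro x
    rw [exponentialPDFReal, gammaPDFReal]
    simp only [rpow_one, Real.Gamma_one, div_one, sub_self, rpow_zero, mul_one]
  set h : ℝ → ℝ := fun x => exponentialPDFReal ρ x * rexp (s * x) with hh
  have hind : h = Set.indicator (Set.Ici 0) (fun x => ρ * rexp (-((ρ - s) * x))) := by
    funext x
    simp only [hh, hpdf x, Set.indicator, Set.mem_Ici]
    by_cases hx : 0 ≤ x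
    · simp only [if_pos hx]
      rw [mul_assoc, ← Real.exp_add]
      congr 2
      ring
    · simp only [if_neg hx, zero_mul]
  have hInt : Integrable h := by
    rw [hind]
    apply (IntegrableOn.integrable_indicator _ measurableSet_Ici)
    rw [integrableOn_Ici_iff_integrableOn_Ioi]
    have h1 : IntegrableOn (fun x => rexp (-(ρ - s) * x)) (Set.Ioi 0) :=
      exp_neg_integrableOn_Ioi 0 hρs
    have h2 := h1.const_mul ρ
    exact h2.congr (Filter.Eventually.of_forall fun x => by
      show ρ * rexp (-(ρ - s) * x) = ρ * rexp (-((ρ - s) * x)); rw [neg_mul])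
  have hval : ∫ x, h x = ρ / (ρ - s) := by
    rw [hind, integral_indicator measurableSet_Ici, integral_Ici_eq_integral_Ioi,
      MeasureTheory.integral_const_mul]
    have hcomp := integral_comp_mul_left_Ioi (fun x => rexp (-x)) 0 hρs
    simp only [mul_zero, neg_zero, integral_exp_neg_Ioi_zero, smul_eq_mul, mul_one] at hcomp
    rw [hcomp, div_eq_mul_inv]
  have hnn : 0 ≤ᵐ[volume] h := Filter.Eventually.of_forall fun x =>
    mul_nonneg (gammaPDFReal_nonneg zero_lt_one hρ x) (Real.exp_nonneg _)
  have hmeas_pdf : Measurable (exponentialPDF ρ) :=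
    ENNReal.measurable_ofReal.comp (measurable_exponentialPDFReal ρ)
  have hmeas_g : Measurable fun x : ℝ => ENNReal.ofReal (rexp (s * x)) :=
    ENNReal.measurable_ofReal.comp
      ((Real.continuous_exp.comp (continuous_const.mul continuous_id)).measurable)
  have hwd : expMeasure ρ = volume.withDensity (exponentialPDF ρ) := rfl
  have m1 : ∫ x, rexp (s * x) ∂(expMeasure ρ)
      = (∫⁻ x, ENNReal.ofReal (rexp (s * x)) ∂(expMeasure ρ)).toReal := by
    apply integral_eq_lintegral_of_nonneg_ae
    · exact Filter.Eventually.of_forall fun x => Real.exp_nonneg _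
    · exact ((Real.continuous_exp.comp
        (continuous_const.mul continuous_id)).measurable).aestronglyMeasurable
  have m2 : ∫⁻ x, ENNReal.ofReal (rexp (s * x)) ∂(expMeasure ρ)
      = ∫⁻ x, ENNReal.ofReal (h x) := by
    rw [hwd, lintegral_withDensity_eq_lintegral_mul volume hmeas_pdf hmeas_g]
    congr 1
    funext x
    show exponentialPDF ρ x * ENNReal.ofReal (rexp (s * x)) = _
    rw [exponentialPDF, ← ENNReal.ofReal_mul (exponentialPDFReal_nonneg hρ x)]
  have m4 : ∫⁻ x, ENNReal.ofReal (h x) = ENNReal.ofReal (∫ x, h x) :=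
    (ofReal_integral_eq_lintegral_ofReal hInt hnn).symm
  rw [m1, m2, m4, hval, ENNReal.toReal_ofReal (by positivity)]

private lemma my_tail_bound {Ω : Type*} [MeasurableSpace Ω] (μ : Measure Ω)
    [IsProbabilityMeasure μ]
    (K : ℝ) (hK : 0 < K) (w₀ : ℕ) (hw₀ : 1 ≤ w₀)
    (V : ℕ → Ω → ℝ) (hVmeas : ∀ j, Measurable (V j)) (hVnonneg : ∀ j ω, 0 ≤ V j ω)
    (hVind : iIndepFun V μ)
    (hVlaw : ∀ j : ℕ, Measure.map (V j) μ = expMeasure (K * ((w₀ : ℝ) + ((j:ℝ) + 1))))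
    (t : ℝ) (L : ℕ) (hL : 1 ≤ L) (n : ℕ) :
    (μ {ω | ∑ j ∈ Finset.range n, V j ω ≤ t}).toReal
      ≤ Real.exp (K * L * t) * (((w₀ : ℝ) + L) / ((w₀ : ℝ) + n)) ^ L := by
  set s : ℝ := -(K * L) with hs
  have hs0 : s ≤ 0 := by
    rw [hs]
    have : (0:ℝ) ≤ K * L := by positivity
    linarith
  have hintsum : Integrable (fun ω => rexp (s * (∑ j ∈ Finset.range n, V j) ω)) μ := by
    have hm : Measurable (fun ω => ∑ j ∈ Finset.range n, V j ω) :=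
      Finset.measurable_sum _ fun j _ => hVmeas j
    have hm2 : Measurable (fun ω => rexp (s * (∑ j ∈ Finset.range n, V j) ω)) := by
      simp only [Finset.sum_apply]
      exact Real.measurable_exp.comp (hm.const_mul s)
    refine Integrable.mono' (integrable_const 1) hm2.aestronglyMeasurable ?_
    refine Filter.Eventually.of_forall fun ω => ?_
    rw [Real.norm_eq_abs, abs_of_pos (Real.exp_pos _)]
    apply Real.exp_le_one_iff.mpr
    simp only [Finset.sum_apply]
    have hsum0 : 0 ≤ ∑ j ∈ Finset.range n, V j ω :=
      Finset.sum_nonneg fun j _ => hVnonneg j ω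
    exact mul_nonpos_of_nonpos_of_nonneg hs0 hsum0
  have chern := measure_le_le_exp_mul_mgf (μ := μ)
    (X := ∑ j ∈ Finset.range n, V j) t hs0 hintsum
  rw [hVind.mgf_sum hVmeas (Finset.range n)] at chern
  have hset : {ω | (∑ j ∈ Finset.range n, V j) ω ≤ t}
      = {ω | ∑ j ∈ Finset.range n, V j ω ≤ t} := by
    ext ω; simp [Finset.sum_apply]
  rw [hset] at chern
  have hmgf : ∀ j : ℕ, mgf (V j) μ s
      = ((w₀:ℝ) + ((j:ℝ) + 1)) / ((w₀:ℝ) + ((j:ℝ) + 1) + L) := by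
    intro j
    have hρ : 0 < K * ((w₀:ℝ) + ((j:ℝ) + 1)) := by positivity
    have hcont : AEStronglyMeasurable (fun x : ℝ => rexp (s * x))
        (Measure.map (V j) μ) :=
      ((Real.continuous_exp.comp
        (continuous_const.mul continuous_id)).measurable).aestronglyMeasurable
    have : mgf (V j) μ s = ∫ x, rexp (s * x) ∂(Measure.map (V j) μ) := by
      rw [mgf, integral_map (hVmeas j).aemeasurable hcont]
    rw [this, hVlaw j, my_integral_exp_expMeasure hρ hs0, hs]
    have hden : (0:ℝ) < (w₀:ℝ) + ((j:ℝ) + 1) + L := by positivity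
    rw [div_eq_div_iff
      (by linarith : ((0:ℝ) < K * ((w₀:ℝ) + ((j:ℝ) + 1)) - -(K * L))).ne' hden.ne']
    ring
  rw [Finset.prod_congr rfl (fun j _ => hmgf j)] at chern
  have hexp : Real.exp (-s * t) = Real.exp (K * L * t) := by rw [hs]; ring_nf
  set c : ℝ := (w₀:ℝ) + 1 with hc
  have hprod : ∏ j ∈ Finset.range n, ((w₀:ℝ) + ((j:ℝ) + 1)) / ((w₀:ℝ) + ((j:ℝ) + 1) + L)
      = ∏ i ∈ Finset.range L, (c + i) / (c + n + i) := by
    rw [← my_prod_shift c (by positivity) L n]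
    exact Finset.prod_congr rfl fun j _ => by rw [hc]; ring_nf
  have hfac : ∏ i ∈ Finset.range L, (c + i) / (c + n + i)
      ≤ (((w₀:ℝ) + L) / ((w₀:ℝ) + n)) ^ L := by
    calc ∏ i ∈ Finset.range L, (c + i) / (c + n + i)
        ≤ ∏ _i ∈ Finset.range L, (((w₀:ℝ) + L) / ((w₀:ℝ) + n)) := ?_
      _ = (((w₀:ℝ) + L) / ((w₀:ℝ) + n)) ^ L := by
          rw [Finset.prod_const, Finset.card_range]
    apply Finset.prod_le_prod
    · intro i _
      positivity
    · intro i hi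
      have hiL : (i:ℝ) + 1 ≤ (L:ℝ) := by
        exact_mod_cast Nat.succ_le_of_lt (Finset.mem_range.mp hi)
      apply div_le_div₀ (by positivity) (by rw [hc]; linarith) (by positivity)
        (by rw [hc]; have : (0:ℝ) ≤ (i:ℝ) := Nat.cast_nonneg i; linarith)
  calc (μ {ω | ∑ j ∈ Finset.range n, V j ω ≤ t}).toReal
      ≤ Real.exp (-s * t) * ∏ j ∈ Finset.range n,
          ((w₀:ℝ) + ((j:ℝ) + 1)) / ((w₀:ℝ) + ((j:ℝ) + 1) + L) := chern
    _ ≤ Real.exp (K * L * t) * (((w₀:ℝ) + L) / ((w₀:ℝ) + n)) ^ L := by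
        rw [hexp, hprod]
        exact mul_le_mul_of_nonneg_left hfac (Real.exp_nonneg _)

private lemma my_sInf_eq_iff {A : Set ℕ} (n : ℕ) (hn : 1 ≤ n) :
    sInf A = n ↔ n ∈ A ∧ ∀ m, m < n → m ∉ A := by
  constructor
  · intro h
    have hne : A.Nonempty := by
      by_contra hempty
      rw [Set.not_nonempty_iff_eq_empty] at hempty
      rw [hempty, Nat.sInf_empty] at h
      omega
    refine ⟨h ▸ Nat.sInf_mem hne, fun m hm hmem => ?_⟩
    have := Nat.sInf_le hmem
    omega
  · rintro ⟨hmem, hmin⟩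
    refine le_antisymm (Nat.sInf_le hmem) ?_
    by_contra hlt
    push_neg at hlt
    have hne : A.Nonempty := ⟨n, hmem⟩
    exact hmin _ hlt (Nat.sInf_mem hne)

private lemma my_sInf_meas {Ω : Type*} [MeasurableSpace Ω] (W : ℕ → Ω → ℝ)
    (hW : ∀ n, Measurable (W n)) (t : ℝ) :
    Measurable (fun ω => sInf {n : ℕ | 1 ≤ n ∧ t ≤ W n ω}) := by
  apply measurable_to_countable'
  intro n
  have h0 : ∀ ω : Ω, 0 ∉ {n : ℕ | 1 ≤ n ∧ t ≤ W n ω} := by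
    intro ω h; exact absurd h.1 (by omega)
  match n with
  | 0 =>
    have heq : (fun ω => sInf {n : ℕ | 1 ≤ n ∧ t ≤ W n ω}) ⁻¹' {0}
        = ⋂ m : ℕ, {ω | W (m + 1) ω < t} := by
      ext ω
      simp only [Set.mem_preimage, Set.mem_singleton_iff, Set.mem_iInter, Set.mem_setOf_eq]
      constructor
      · intro h m
        by_contra hlt
        push_neg at hlt
        have hmem : (m + 1) ∈ {n : ℕ | 1 ≤ n ∧ t ≤ W n ω} := ⟨by omega, hlt⟩
        have hsmem := Nat.sInf_mem
          (⟨m + 1, hmem⟩ : {n : ℕ | 1 ≤ n ∧ t ≤ W n ω}.Nonempty)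
        rw [h] at hsmem
        exact h0 ω hsmem
      · intro h
        rw [Nat.sInf_eq_zero]
        right
        ext m
        simp only [Set.mem_setOf_eq, Set.mem_empty_iff_false, iff_false, not_and, not_le]
        intro hm
        obtain ⟨k, rfl⟩ : ∃ k, m = k + 1 := ⟨m - 1, by omega⟩
        exact h k
    rw [heq]
    exact MeasurableSet.iInter fun m => measurableSet_lt (hW (m + 1)) measurable_const
  | Nat.succ k =>
    have heq : (fun ω => sInf {n : ℕ | 1 ≤ n ∧ t ≤ W n ω}) ⁻¹' {k + 1}
        = {ω | t ≤ W (k + 1) ω} ∩ ⋂ m ∈ Finset.range (k + 1), {ω | ¬ (1 ≤ m ∧ t ≤ W m ω)} := by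
      ext ω
      simp only [Set.mem_preimage, Set.mem_singleton_iff, Set.mem_inter_iff, Set.mem_setOf_eq,
        Set.mem_iInter, Finset.mem_range]
      rw [my_sInf_eq_iff (k + 1) (by omega)]
      constructor
      · rintro ⟨⟨_, h2⟩, hmin⟩
        exact ⟨h2, fun m hm => hmin m hm⟩
      · rintro ⟨h2, hmin⟩
        exact ⟨⟨by omega, h2⟩, fun m hm => hmin m hm⟩
    rw [heq]
    refine (measurableSet_le measurable_const (hW (k + 1))).inter ?_
    refine MeasurableSet.biInter (Set.to_countable _) fun m _ => ?_
    by_cases hm : 1 ≤ m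
    · have : {ω : Ω | ¬ (1 ≤ m ∧ t ≤ W m ω)} = {ω | W m ω < t} := by
        ext ω; simp [hm]
      rw [this]
      exact measurableSet_lt (hW m) measurable_const
    · have : {ω : Ω | ¬ (1 ≤ m ∧ t ≤ W m ω)} = Set.univ := by
        ext ω; simp [hm]
      rw [this]
      exact MeasurableSet.univ

/-- All moments of the dominating width variable are finite: with `U n`
independent exponentials of mean `1/(K(w₀+n))` (for `n ≥ 1`), the hitting index
`τ(t) = inf{n ≥ 1 : U₁ + ⋯ + U_n ≥ t}` is almost surely finite, and
`Q(t) = w₀ + τ(t)` has finite `r`-th moment for every `r > 0`. -/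
theorem dominating_width_all_moments_finite
    {Ω : Type*} [MeasurableSpace Ω] (μ : Measure Ω) [IsProbabilityMeasure μ]
    (K : ℝ) (hK : 0 < K) (w₀ : ℕ) (hw₀ : 1 ≤ w₀)
    (U : ℕ → Ω → ℝ)
    (hind : iIndepFun U μ)
    (hlaw : ∀ n : ℕ, 1 ≤ n → Measure.map (U n) μ = expMeasure (K * ((w₀ : ℝ) + n)))
    (t : ℝ) (ht : 0 < t) :
    (∀ᵐ ω ∂μ, ∃ n : ℕ, 1 ≤ n ∧ t ≤ ∑ j ∈ Finset.Icc 1 n, U j ω) ∧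
    ∀ r : ℝ, 0 < r →
      Integrable
        (fun ω =>
          ((w₀ : ℝ) +
            (sInf {n : ℕ | 1 ≤ n ∧ t ≤ ∑ j ∈ Finset.Icc 1 n, U j ω} : ℕ)) ^ r) μ := by
  have hcast : ∀ j : ℕ, ((j + 1 : ℕ) : ℝ) = (j : ℝ) + 1 := fun j => by push_cast; ring
  have hlaw' : ∀ j : ℕ, Measure.map (U (j + 1)) μ
      = expMeasure (K * ((w₀ : ℝ) + ((j:ℝ) + 1))) := by
    intro j
    rw [hlaw (j + 1) (by omega), hcast j]
  have hρpos : ∀ j : ℕ, (0:ℝ) < K * ((w₀ : ℝ) + ((j:ℝ) + 1)) := fun j => by positivity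
  have hAE : ∀ j : ℕ, AEMeasurable (U (j + 1)) μ := by
    intro j
    by_contra hc
    have h0 := Measure.map_of_not_aemeasurable (f := U (j + 1)) (μ := μ) hc
    rw [hlaw' j] at h0
    haveI := isProbabilityMeasure_expMeasure (hρpos j)
    exact (IsProbabilityMeasure.ne_zero _) h0
  have hUnn : ∀ j : ℕ, ∀ᵐ ω ∂μ, 0 ≤ U (j + 1) ω := by
    intro j
    have hpre : μ (U (j + 1) ⁻¹' (Set.Iio 0)) = 0 := by
      rw [← Measure.map_apply_of_aemeasurable (hAE j) measurableSet_Iio, hlaw' j]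
      show (gammaMeasure 1 (K * ((w₀ : ℝ) + ((j:ℝ) + 1)))) (Set.Iio 0) = 0
      rw [gammaMeasure, withDensity_apply _ measurableSet_Iio]
      exact lintegral_gammaPDF_of_nonpos le_rfl
    rw [ae_iff]
    have : {ω | ¬ 0 ≤ U (j + 1) ω} = U (j + 1) ⁻¹' (Set.Iio 0) := by
      ext ω; simp [not_le]
    rw [this]
    exact hpre
  -- measurable nonnegative modifications
  set V : ℕ → Ω → ℝ := fun j ω => max ((hAE j).mk (U (j + 1)) ω) 0 with hV
  have hVmeas : ∀ j, Measurable (V j) := fun j => ((hAE j).measurable_mk).max measurable_const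
  have hVnonneg : ∀ j ω, 0 ≤ V j ω := fun j ω => le_max_right _ _
  have hVae : ∀ j, U (j + 1) =ᵐ[μ] V j := by
    intro j
    filter_upwards [(hAE j).ae_eq_mk, hUnn j] with ω h1 h2
    rw [hV]
    simp only
    rw [← h1, max_eq_left h2]
  have hVlaw : ∀ j : ℕ, Measure.map (V j) μ
      = expMeasure (K * ((w₀:ℝ) + ((j:ℝ) + 1))) := by
    intro j
    rw [← Measure.map_congr (hVae j)]
    exact hlaw' j
  have hVind : iIndepFun V μ :=
    my_iIndep_ae_eq (my_iIndep_shift U hind) hVae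
  set W : ℕ → Ω → ℝ := fun n ω => ∑ j ∈ Finset.range n, V j ω with hW
  have hWmeas : ∀ n, Measurable (W n) := fun n => Finset.measurable_sum _ fun j _ => hVmeas j
  have hagree : ∀ᵐ ω ∂μ, ∀ n : ℕ, ∑ j ∈ Finset.Icc 1 n, U j ω = W n ω := by
    filter_upwards [ae_all_iff.2 hVae] with ω hω
    intro n
    rw [hW]
    simp only
    rw [← Finset.Ico_add_one_right_eq_Icc, Finset.sum_Ico_eq_sum_range, Nat.add_sub_cancel]
    exact Finset.sum_congr rfl fun i _ => by rw [add_comm 1 i]; exact hω i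
  have hTail : ∀ (L : ℕ), 1 ≤ L → ∀ n : ℕ, μ {ω | W n ω ≤ t}
      ≤ ENNReal.ofReal (Real.exp (K * L * t) * (((w₀:ℝ) + L) / ((w₀:ℝ) + n)) ^ L) := by
    intro L hL n
    have h1 := my_tail_bound μ K hK w₀ hw₀ V hVmeas hVnonneg hVind hVlaw t L hL n
    calc μ {ω | W n ω ≤ t} = ENNReal.ofReal ((μ {ω | W n ω ≤ t}).toReal) := by
          rw [ENNReal.ofReal_toReal (measure_ne_top μ _)]
      _ ≤ _ := ENNReal.ofReal_le_ofReal h1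
  have hGc : μ {ω | ¬ ∀ n : ℕ, ∑ j ∈ Finset.Icc 1 n, U j ω = W n ω} = 0 := by
    rw [← ae_iff]
    exact hagree
  constructor
  · -- almost sure finiteness
    rw [ae_iff]
    refine le_antisymm ?_ (zero_le)
    have hboundN : ∀ n : ℕ,
        μ {ω | ¬ ∃ m : ℕ, 1 ≤ m ∧ t ≤ ∑ j ∈ Finset.Icc 1 m, U j ω}
          ≤ ENNReal.ofReal (Real.exp (K * 1 * t)
              * (((w₀:ℝ) + 1) / ((w₀:ℝ) + ((n + 1 : ℕ):ℝ))) ^ 1) := by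
      intro n
      have hsub : {ω | ¬ ∃ m : ℕ, 1 ≤ m ∧ t ≤ ∑ j ∈ Finset.Icc 1 m, U j ω}
          ⊆ {ω | W (n + 1) ω ≤ t}
            ∪ {ω | ¬ ∀ m : ℕ, ∑ j ∈ Finset.Icc 1 m, U j ω = W m ω} := by
        intro ω hω
        by_cases hg : ∀ m : ℕ, ∑ j ∈ Finset.Icc 1 m, U j ω = W m ω
        · left
          simp only [Set.mem_setOf_eq] at hω ⊢
          push_neg at hω
          have := hω (n + 1) (by omega)
          rw [hg (n + 1)] at this
          linarith
        · right
          exact hg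
      calc μ {ω | ¬ ∃ m : ℕ, 1 ≤ m ∧ t ≤ ∑ j ∈ Finset.Icc 1 m, U j ω}
          ≤ μ ({ω | W (n + 1) ω ≤ t}
              ∪ {ω | ¬ ∀ m : ℕ, ∑ j ∈ Finset.Icc 1 m, U j ω = W m ω}) := measure_mono hsub
        _ ≤ μ {ω | W (n + 1) ω ≤ t}
              + μ {ω | ¬ ∀ m : ℕ, ∑ j ∈ Finset.Icc 1 m, U j ω = W m ω} := measure_union_le _ _
        _ = μ {ω | W (n + 1) ω ≤ t} := by rw [hGc, add_zero]
        _ ≤ _ := by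
            have := hTail 1 le_rfl (n + 1)
            simpa using this
    have htend : Filter.Tendsto (fun n : ℕ => ENNReal.ofReal (Real.exp (K * 1 * t)
        * (((w₀:ℝ) + 1) / ((w₀:ℝ) + ((n + 1 : ℕ):ℝ))) ^ 1)) Filter.atTop (nhds 0) := by
      have hreal : Filter.Tendsto (fun n : ℕ => Real.exp (K * 1 * t)
          * (((w₀:ℝ) + 1) / ((w₀:ℝ) + ((n + 1 : ℕ):ℝ))) ^ 1) Filter.atTop (nhds 0) := by
        simp only [pow_one]
        have h1 : Filter.Tendsto (fun m : ℕ =>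
            (Real.exp (K * 1 * t) * ((w₀:ℝ) + 1)) / (m:ℝ)) Filter.atTop (nhds 0) :=
          tendsto_const_div_atTop_nhds_zero_nat _
        have h2 := h1.comp (Filter.tendsto_add_atTop_nat (w₀ + 1))
        have : (fun n : ℕ => Real.exp (K * 1 * t)
            * (((w₀:ℝ) + 1) / ((w₀:ℝ) + ((n + 1 : ℕ):ℝ))))
            = fun n : ℕ => (Real.exp (K * 1 * t) * ((w₀:ℝ) + 1)) / ((n + (w₀ + 1) : ℕ):ℝ) := by
          funext n
          push_cast
          rw [mul_div_assoc]
          ring_nf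
        rw [this]
        exact h2
      have := ENNReal.tendsto_ofReal hreal
      simpa using this
    exact ge_of_tendsto' htend hboundN
  · -- all moments finite
    intro r hr
    set M : ℕ := ⌈r⌉₊ with hM
    set L : ℕ := M + 2 with hLdef
    have hL1 : 1 ≤ L := by omega
    set τ : Ω → ℕ := fun ω => sInf {n : ℕ | 1 ≤ n ∧ t ≤ W n ω} with hτ
    have hτmeas : Measurable τ := my_sInf_meas W hWmeas t
    have hfeq : (fun ω => ((w₀:ℝ)
          + (sInf {n : ℕ | 1 ≤ n ∧ t ≤ ∑ j ∈ Finset.Icc 1 n, U j ω} : ℕ)) ^ r)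
        =ᵐ[μ] (fun ω => ((w₀:ℝ) + (τ ω : ℝ)) ^ r) := by
      filter_upwards [hagree] with ω hω
      have : {n : ℕ | 1 ≤ n ∧ t ≤ ∑ j ∈ Finset.Icc 1 n, U j ω}
          = {n : ℕ | 1 ≤ n ∧ t ≤ W n ω} := by
        ext m
        rw [Set.mem_setOf_eq, Set.mem_setOf_eq, hω m]
      rw [this]
    refine Integrable.congr ?_ hfeq.symm
    have hg : Measurable (fun n : ℕ => ((w₀:ℝ) + (n:ℝ)) ^ r) := measurable_from_nat
    constructor
    · exact (hg.comp hτmeas).aestronglyMeasurable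
    · -- finite integral
      rw [hasFiniteIntegral_iff_norm]
      set E : ℝ := Real.exp (K * L * t) with hE
      have hE1 : 1 ≤ E := Real.one_le_exp (by positivity)
      set D : ℝ := E * ((w₀:ℝ) + L) ^ L * 2 ^ L with hD
      have hDpos : 0 < D := by
        rw [hD]; positivity
      have hFnn : ∀ ω, (0:ℝ) ≤ ((w₀:ℝ) + (τ ω:ℝ)) ^ r :=
        fun ω => Real.rpow_nonneg (by positivity) r
      have hnorm : ∀ ω, ENNReal.ofReal ‖((w₀:ℝ) + (τ ω:ℝ)) ^ r‖
          = ENNReal.ofReal (((w₀:ℝ) + (τ ω:ℝ)) ^ r) := by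
        intro ω
        rw [Real.norm_eq_abs, abs_of_nonneg (hFnn ω)]
      calc ∫⁻ ω, ENNReal.ofReal ‖((w₀:ℝ) + (τ ω:ℝ)) ^ r‖ ∂μ
          = ∫⁻ ω, ENNReal.ofReal (((w₀:ℝ) + (τ ω:ℝ)) ^ r) ∂μ := by
            exact lintegral_congr fun ω => hnorm ω
        _ = ∫⁻ n, ENNReal.ofReal (((w₀:ℝ) + (n:ℝ)) ^ r) ∂(Measure.map τ μ) := by
            rw [lintegral_map measurable_from_nat hτmeas]
        _ = ∑' n : ℕ, ENNReal.ofReal (((w₀:ℝ) + (n:ℝ)) ^ r) * (Measure.map τ μ) {n} :=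
            lintegral_countable' _
        _ ≤ ∑' n : ℕ, ENNReal.ofReal (D / ((n:ℝ) + 1) ^ 2) := by
            apply ENNReal.tsum_le_tsum
            intro n
            -- key term bound
            have hmap : (Measure.map τ μ) {n} = μ (τ ⁻¹' {n}) :=
              Measure.map_apply hτmeas (measurableSet_singleton n)
            have hx1 : (1:ℝ) ≤ (w₀:ℝ) + (n:ℝ) := by
              have : (1:ℝ) ≤ (w₀:ℝ) := by exact_mod_cast hw₀
              have : (0:ℝ) ≤ (n:ℝ) := Nat.cast_nonneg n
              push_cast
              linarith [show (1:ℝ) ≤ (w₀:ℝ) from by exact_mod_cast hw₀]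
            have hrM : ((w₀:ℝ) + (n:ℝ)) ^ r ≤ ((w₀:ℝ) + (n:ℝ)) ^ (M:ℕ) := by
              rw [← Real.rpow_natCast ((w₀:ℝ) + (n:ℝ)) M]
              exact Real.rpow_le_rpow_of_exponent_le hx1 (Nat.le_ceil r)
            by_cases hn2 : 2 ≤ n
            · obtain ⟨m, rfl⟩ : ∃ m, n = m + 2 := ⟨n - 2, by omega⟩
              -- τ = m+2 implies W (m+1) ≤ t
              have hsub : τ ⁻¹' {m + 2} ⊆ {ω | W (m + 1) ω ≤ t} := by
                intro ω hω
                simp only [Set.mem_preimage, Set.mem_singleton_iff, hτ] at hω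
                simp only [Set.mem_setOf_eq]
                by_contra hlt
                push_neg at hlt
                have hmem : (m + 1) ∈ {n : ℕ | 1 ≤ n ∧ t ≤ W n ω} := ⟨by omega, hlt.le⟩
                have := Nat.sInf_le hmem
                omega
              have hμn : μ (τ ⁻¹' {m + 2})
                  ≤ ENNReal.ofReal (E * (((w₀:ℝ) + L) / ((w₀:ℝ) + ((m+1:ℕ):ℝ))) ^ L) :=
                le_trans (measure_mono hsub) (hTail L hL1 (m + 1))
              rw [hmap]
              calc ENNReal.ofReal (((w₀:ℝ) + ((m+2:ℕ):ℝ)) ^ r) * μ (τ ⁻¹' {m + 2})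
                  ≤ ENNReal.ofReal (((w₀:ℝ) + ((m+2:ℕ):ℝ)) ^ (M:ℕ))
                    * ENNReal.ofReal (E * (((w₀:ℝ) + L) / ((w₀:ℝ) + ((m+1:ℕ):ℝ))) ^ L) :=
                    mul_le_mul' (ENNReal.ofReal_le_ofReal hrM) hμn
                _ = ENNReal.ofReal ((((w₀:ℝ) + ((m+2:ℕ):ℝ)) ^ (M:ℕ))
                    * (E * (((w₀:ℝ) + L) / ((w₀:ℝ) + ((m+1:ℕ):ℝ))) ^ L)) := by
                    rw [← ENNReal.ofReal_mul (by positivity)]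
                _ ≤ ENNReal.ofReal (D / (((m+2:ℕ):ℝ) + 1) ^ 2) := by
                    apply ENNReal.ofReal_le_ofReal
                    set x : ℝ := (w₀:ℝ) + ((m+2:ℕ):ℝ) with hxdef
                    set y : ℝ := (w₀:ℝ) + ((m+1:ℕ):ℝ) with hydef
                    have hy1 : (1:ℝ) ≤ y := by
                      rw [hydef]; push_cast
                      linarith [show (1:ℝ) ≤ (w₀:ℝ) from by exact_mod_cast hw₀,
                        show (0:ℝ) ≤ (m:ℝ) from Nat.cast_nonneg m]
                    have hx2y : x ≤ 2 * y := by
                      rw [hxdef, hydef]; push_cast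
                      linarith [show (1:ℝ) ≤ (w₀:ℝ) from by exact_mod_cast hw₀,
                        show (0:ℝ) ≤ (m:ℝ) from Nat.cast_nonneg m]
                    have hnx : ((m+2:ℕ):ℝ) + 1 ≤ 2 * y := by
                      rw [hydef]; push_cast
                      linarith [show (1:ℝ) ≤ (w₀:ℝ) from by exact_mod_cast hw₀]
                    have hxpos : (0:ℝ) < x := by
                      rw [hxdef]; positivity
                    have hypos : (0:ℝ) < y := by linarith
                    have hnpos : (0:ℝ) < ((m+2:ℕ):ℝ) + 1 := by positivity
                    set z : ℝ := ((m+2:ℕ):ℝ) + 1 with hzdef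
                    set A : ℝ := (w₀:ℝ) + (L:ℝ) with hAdef
                    have hApos : (0:ℝ) < A := by rw [hAdef]; positivity
                    have hzpos : (0:ℝ) < z := hnpos
                    rw [div_pow]
                    have e1 : x ^ M * (E * (A ^ L / y ^ L)) = E * A ^ L * (x ^ M / y ^ L) := by
                      ring
                    have e2 : D / z ^ 2 = E * A ^ L * (2 ^ L / z ^ 2) := by
                      rw [hD]; ring
                    rw [e1, e2]
                    apply mul_le_mul_of_nonneg_left _ (by positivity)
                    rw [div_le_div_iff₀ (by positivity) (by positivity)]
                    calc x ^ M * z ^ 2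
                        ≤ (2 * y) ^ M * (2 * y) ^ 2 :=
                          mul_le_mul (pow_le_pow_left₀ hxpos.le hx2y M)
                            (pow_le_pow_left₀ hzpos.le hnx 2) (by positivity) (by positivity)
                      _ = 2 ^ L * y ^ L := by
                          rw [hLdef, mul_pow, mul_pow, pow_add, pow_add]; ring
            · -- n ≤ 1
              have hμ1 : μ (τ ⁻¹' {n}) ≤ 1 := prob_le_one
              rw [hmap]
              calc ENNReal.ofReal (((w₀:ℝ) + (n:ℝ)) ^ r) * μ (τ ⁻¹' {n})
                  ≤ ENNReal.ofReal (((w₀:ℝ) + (n:ℝ)) ^ (M:ℕ)) * 1 :=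
                    mul_le_mul' (ENNReal.ofReal_le_ofReal hrM) hμ1
                _ = ENNReal.ofReal (((w₀:ℝ) + (n:ℝ)) ^ (M:ℕ)) := by rw [mul_one]
                _ ≤ ENNReal.ofReal (D / ((n:ℝ) + 1) ^ 2) := by
                    apply ENNReal.ofReal_le_ofReal
                    have hnL : (w₀:ℝ) + (n:ℝ) ≤ (w₀:ℝ) + (L:ℝ) := by
                      have : (n:ℝ) ≤ (L:ℝ) := by
                        exact_mod_cast (by omega : n ≤ L)
                      linarith
                    have hA1 : (1:ℝ) ≤ (w₀:ℝ) + (L:ℝ) := by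
                      have h1 : (1:ℝ) ≤ (w₀:ℝ) := by exact_mod_cast hw₀
                      have h2 : (0:ℝ) ≤ (L:ℝ) := Nat.cast_nonneg L
                      linarith
                    have hn1 : (n:ℝ) ≤ 1 := by exact_mod_cast (by omega : n ≤ 1)
                    have hS : ((w₀:ℝ) + (n:ℝ)) ^ (M:ℕ) ≤ ((w₀:ℝ) + (L:ℝ)) ^ L :=
                      le_trans (pow_le_pow_left₀ (by positivity) hnL M)
                        (pow_le_pow_right₀ hA1 (by omega))
                    have h2 : ((n:ℝ) + 1) ^ 2 ≤ (2:ℝ) ^ L :=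
                      le_trans (pow_le_pow_left₀ (by positivity) (by linarith) 2)
                        (pow_le_pow_right₀ one_le_two (by omega))
                    rw [le_div_iff₀ (by positivity)]
                    calc ((w₀:ℝ) + (n:ℝ)) ^ (M:ℕ) * ((n:ℝ) + 1) ^ 2
                        ≤ ((w₀:ℝ) + (L:ℝ)) ^ L * 2 ^ L :=
                          mul_le_mul hS h2 (by positivity) (by positivity)
                      _ ≤ E * (((w₀:ℝ) + (L:ℝ)) ^ L * 2 ^ L) :=
                          le_mul_of_one_le_left (by positivity) hE1
                      _ = D := by rw [hD]; ring
        _ = ENNReal.ofReal (∑' n : ℕ, D / ((n:ℝ) + 1) ^ 2) := by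
            have h0 : Summable (fun n : ℕ => 1 / ((n:ℝ)) ^ 2) :=
              summable_one_div_nat_pow.mpr (by norm_num)
            have h1 : Summable (fun n : ℕ => 1 / (((n+1:ℕ)):ℝ) ^ 2) :=
              (summable_nat_add_iff 1).2 h0
            have h2 : Summable (fun n : ℕ => D / ((n:ℝ) + 1) ^ 2) := by
              refine (h1.mul_left D).congr fun n => ?_
              push_cast
              rw [mul_one_div]
            exact (ENNReal.ofReal_tsum_of_nonneg (fun n => by positivity) h2).symm
        _ < ⊤ := ENNReal.ofReal_lt_top
end

section
/- Chernoff-type tail bound for sums of exponentials with linearly growing rates: Let K > 0, let w₀ be a nonnegative integer, and let (U_j)_{j>w₀} be independent random variables with U_j exponentially distributed with rate λ_j satisfying 0 < λ_j ≤ 2Kj. Then for every t > 0, every λ > 0 and every integer m > w₀: P(U_{w₀+1} + ⋯ + U_m < t) ≤ exp(λt)·((2K(w₀+1)+λ)/(2Km+λ))^{λ/(2K)}. -/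
open MeasureTheory ProbabilityTheory

section Aux
open Real Set Filter


-- Lemma A: log integral comparison
lemma aux_log_sum (c l : ℝ) (hc : 0 < c) (hl : 0 < l) (a : ℕ) :
    ∀ n : ℕ, a ≤ n →
      Real.log ((c * (n + 1) + l) / (c * a + l)) ≤ ∑ j ∈ Finset.Icc a n, c / (c * j + l) := by
  have hpos : ∀ k : ℕ, 0 < c * k + l := fun k => by positivity
  have key : ∀ k : ℕ, Real.log ((c * (k + 1) + l) / (c * k + l)) ≤ c / (c * k + l) := by
    intro k
    have hk := hpos k
    have h1 : (0:ℝ) < (c * (k + 1) + l) / (c * k + l) := by positivity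
    calc Real.log ((c * (k + 1) + l) / (c * k + l))
        ≤ (c * (k + 1) + l) / (c * k + l) - 1 := Real.log_le_sub_one_of_pos h1
      _ = c / (c * k + l) := by field_simp; ring
  intro n hn
  induction n, hn using Nat.le_induction with
  | base =>
      rw [Finset.Icc_self, Finset.sum_singleton]
      exact_mod_cast key a
  | succ n hn ih =>
      rw [Finset.sum_Icc_succ_top (by omega : a ≤ n + 1)]
      have hsplit : (c * ((n:ℝ) + 1 + 1) + l) / (c * a + l)
          = ((c * (n + 1) + l) / (c * a + l)) * ((c * ((n:ℝ)+1+1) + l) / (c * ((n:ℝ)+1) + l)) := by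
        have h1 := hpos a; have h2 := hpos (n+1)
        push_cast at h2 ⊢
        field_simp
      have h2 := hpos (n+1)
      push_cast at h2
      have hkey := key (n+1)
      push_cast at hkey
      push_cast
      calc Real.log ((c * ((n:ℝ) + 1 + 1) + l) / (c * a + l))
          = Real.log ((c * ((n:ℝ) + 1) + l) / (c * a + l))
            + Real.log ((c * ((n:ℝ)+1+1) + l) / (c * ((n:ℝ)+1) + l)) := by
            rw [hsplit, Real.log_mul (by positivity) (by positivity)]
        _ ≤ (∑ j ∈ Finset.Icc a n, c / (c * (j:ℝ) + l)) + c / (c * ((n:ℝ)+1) + l) := by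
            gcongr


-- Lemma B : product bound
lemma aux_prod_bound (c l : ℝ) (hc : 0 < c) (hl : 0 < l) (lam : ℕ → ℝ) (a m : ℕ)
    (ham : a ≤ m) (hlam : ∀ j ∈ Finset.Icc a m, 0 < lam j ∧ lam j ≤ c * j) :
    ∏ j ∈ Finset.Icc a m, lam j / (lam j + l) ≤ ((c * a + l) / (c * m + l)) ^ (l / c) := by
  have hpos : ∀ k : ℕ, 0 < c * k + l := fun k => by positivity
  have step : ∀ j ∈ Finset.Icc a m, lam j / (lam j + l) ≤ Real.exp (-(l / (c * j + l))) := by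
    intro j hj
    obtain ⟨h1, h2⟩ := hlam j hj
    have hj0 : 0 < c * (j:ℝ) := lt_of_lt_of_le h1 h2
    have hjl := hpos j
    have h3 : lam j / (lam j + l) ≤ c * j / (c * j + l) := by
      rw [div_le_div_iff₀ (by linarith) (by linarith)]
      nlinarith
    have h4 : c * (j:ℝ) / (c * j + l) = 1 - l / (c * j + l) := by
      field_simp
      ring
    have h5 : 1 - l / (c * (j:ℝ) + l) ≤ Real.exp (-(l / (c * j + l))) := by
      have := Real.add_one_le_exp (-(l / (c * (j:ℝ) + l)))
      linarith
    linarith [h4 ▸ h3]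
  have hprod : ∏ j ∈ Finset.Icc a m, lam j / (lam j + l)
      ≤ ∏ j ∈ Finset.Icc a m, Real.exp (-(l / (c * j + l))) := by
    refine Finset.prod_le_prod (fun j hj => ?_) step
    have := (hlam j hj).1; have := hpos j
    positivity
  have hexp : ∏ j ∈ Finset.Icc a m, Real.exp (-(l / (c * (j:ℝ) + l)))
      = Real.exp (-(∑ j ∈ Finset.Icc a m, l / (c * j + l))) := by
    rw [← Real.exp_sum, Finset.sum_neg_distrib]
  -- sum rewrite
  have hsum : (∑ j ∈ Finset.Icc a m, l / (c * (j:ℝ) + l))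
      = (l / c) * ∑ j ∈ Finset.Icc a m, c / (c * j + l) := by
    rw [Finset.mul_sum]
    refine Finset.sum_congr rfl fun j _ => ?_
    have := hpos j
    field_simp
  have hlog : Real.log ((c * m + l) / (c * a + l)) ≤ ∑ j ∈ Finset.Icc a m, c / (c * j + l) := by
    refine le_trans ?_ (aux_log_sum c l hc hl a m ham)
    have h1 := hpos a; have h2 := hpos m
    apply Real.log_le_log (by positivity)
    gcongr
    linarith [hc]
  have hm := hpos m; have ha := hpos a
  have hfinal : Real.exp (-(∑ j ∈ Finset.Icc a m, l / (c * j + l)))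
      ≤ ((c * a + l) / (c * m + l)) ^ (l / c) := by
    rw [Real.rpow_def_of_pos (by positivity)]
    apply Real.exp_le_exp.mpr
    rw [hsum]
    have hloginv : Real.log ((c * a + l) / (c * m + l)) = - Real.log ((c * m + l) / (c * a + l)) := by
      rw [← Real.log_inv]
      congr 1
      field_simp
    rw [hloginv]
    have hlc : 0 < l / c := by positivity
    calc -(l / c * ∑ j ∈ Finset.Icc a m, c / (c * (j:ℝ) + l))
        ≤ -(l / c * Real.log ((c * m + l) / (c * a + l))) := by
          apply neg_le_neg
          exact mul_le_mul_of_nonneg_left hlog hlc.le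
      _ = -Real.log ((c * ↑m + l) / (c * ↑a + l)) * (l / c) := by ring
  calc ∏ j ∈ Finset.Icc a m, lam j / (lam j + l)
      ≤ ∏ j ∈ Finset.Icc a m, Real.exp (-(l / (c * (j:ℝ) + l))) := hprod
    _ = Real.exp (-(∑ j ∈ Finset.Icc a m, l / (c * j + l))) := hexp
    _ ≤ _ := hfinal


lemma aux_real_int (b : ℝ) (hb : 0 < b) : ∫ x in Ioi (0:ℝ), Real.exp (-(b * x)) = 1 / b := by
  have hderiv : ∀ x ∈ Ici (0:ℝ), HasDerivAt (fun x => -Real.exp (-(b * x)) / b) (Real.exp (-(b * x))) x := by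
    intro x _
    have h := (((hasDerivAt_id x).const_mul b).neg.exp).neg.div_const b
    simp only [neg_mul, id_eq, mul_one] at h
    refine h.congr_deriv ?_
    simp only [Pi.neg_apply, neg_mul, mul_neg, neg_neg]
    field_simp
  have hint : IntegrableOn (fun x => Real.exp (-(b * x))) (Ioi (0:ℝ)) := by
    have := exp_neg_integrableOn_Ioi 0 hb
    simpa [neg_mul] using this
  have htend : Filter.Tendsto (fun x => -Real.exp (-(b * x)) / b) Filter.atTop (nhds 0) := by
    have h1 : Filter.Tendsto (fun x : ℝ => -(b * x)) Filter.atTop Filter.atBot := by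
      apply Filter.tendsto_neg_atBot_iff.mpr
      exact Filter.Tendsto.const_mul_atTop hb Filter.tendsto_id
    have := (Real.tendsto_exp_atBot.comp h1).neg.div_const b
    simpa using this
  have := integral_Ioi_of_hasDerivAt_of_tendsto' hderiv hint htend
  rw [this]
  simp
  field_simp

lemma aux_lintegral_exp (r l : ℝ) (hr : 0 < r) (hl : 0 < l) :
    ∫⁻ x, ENNReal.ofReal (Real.exp (-(l * x))) ∂(expMeasure r) = ENNReal.ofReal (r / (r + l)) := by
  have hb : 0 < r + l := by linarith
  have hmf : Measurable (gammaPDF 1 r) := (measurable_gammaPDFReal 1 r).ennreal_ofReal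
  have hmg : Measurable (fun x : ℝ => ENNReal.ofReal (Real.exp (-(l * x)))) :=
    (Real.continuous_exp.comp (continuous_const.mul continuous_id).neg).measurable.ennreal_ofReal
  rw [expMeasure, gammaMeasure, lintegral_withDensity_eq_lintegral_mul _ hmf hmg]
  have heq : ∀ x : ℝ, (gammaPDF 1 r * fun x => ENNReal.ofReal (Real.exp (-(l * x)))) x
      = Set.indicator (Ici (0:ℝ)) (fun x => ENNReal.ofReal (r * Real.exp (-((r + l) * x)))) x := by
    intro x
    have h0 : gammaPDF 1 r x = exponentialPDF r x := rfl
    simp only [Pi.mul_apply, h0, exponentialPDF_eq]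
    by_cases hx : 0 ≤ x
    · rw [if_pos hx, Set.indicator_of_mem (mem_Ici.mpr hx)]
      rw [← ENNReal.ofReal_mul (by positivity)]
      congr 1
      rw [mul_assoc, ← Real.exp_add]
      ring_nf
    · rw [if_neg hx, Set.indicator_of_notMem (by simpa [mem_Ici] using hx)]
      simp
  have hint2 : IntegrableOn (fun x => r * Real.exp (-((r + l) * x))) (Ioi (0:ℝ)) := by
    apply Integrable.const_mul
    have h := exp_neg_integrableOn_Ioi 0 hb
    rw [show (fun x:ℝ => Real.exp (-((r+l)*x))) = fun x:ℝ => Real.exp (-(r+l)*x) from funext fun x => by rw [neg_mul]]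
    exact h
  calc ∫⁻ x, (gammaPDF 1 r * fun x => ENNReal.ofReal (Real.exp (-(l * x)))) x
      = ∫⁻ x, Set.indicator (Ici (0:ℝ)) (fun x => ENNReal.ofReal (r * Real.exp (-((r + l) * x)))) x :=
        lintegral_congr heq
    _ = ∫⁻ x in Ici (0:ℝ), ENNReal.ofReal (r * Real.exp (-((r + l) * x))) := by
        rw [lintegral_indicator measurableSet_Ici]
    _ = ∫⁻ x in Ioi (0:ℝ), ENNReal.ofReal (r * Real.exp (-((r + l) * x))) :=
        (setLIntegral_congr Ioi_ae_eq_Ici).symm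
    _ = ENNReal.ofReal (∫ x in Ioi (0:ℝ), r * Real.exp (-((r + l) * x))) :=
        (ofReal_integral_eq_lintegral_ofReal hint2
          (Filter.Eventually.of_forall fun x => by positivity)).symm
    _ = ENNReal.ofReal (r / (r + l)) := by
        rw [MeasureTheory.integral_const_mul, aux_real_int _ hb]
        congr 1
        field_simp


lemma aux_iIndep_mod {Ω : Type*} [MeasurableSpace Ω] {μ : Measure Ω} [IsProbabilityMeasure μ]
    {U W : ℕ → Ω → ℝ} (w₀ : ℕ)
    (hind : iIndepFun U μ)
    (hae : ∀ j, w₀ < j → U j =ᵐ[μ] W j)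
    (hconst : ∀ j, ¬ w₀ < j → W j = fun _ => (0:ℝ)) :
    iIndepFun W μ := by
  rw [iIndepFun_iff_measure_inter_preimage_eq_mul] at hind ⊢
  intro S sets hsets
  classical
  by_cases hc : ∀ i ∈ S, ¬ w₀ < i → (0:ℝ) ∈ sets i
  · set S' := S.filter (fun i => w₀ < i) with hS'
    have hmemS' : ∀ i ∈ S', w₀ < i := fun i hi => (Finset.mem_filter.mp hi).2
    have huniv : ∀ i ∈ S, ¬ w₀ < i → W i ⁻¹' sets i = Set.univ := by
      intro i hi hni
      rw [hconst i hni]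
      ext ω; simp [hc i hi hni]
    have h1 : (⋂ i ∈ S, W i ⁻¹' sets i) = ⋂ i ∈ S', W i ⁻¹' sets i := by
      ext ω
      simp only [Set.mem_iInter]
      constructor
      · intro h i hi; exact h i (Finset.mem_of_mem_filter i hi)
      · intro h i hi
        by_cases hwi : w₀ < i
        · exact h i (Finset.mem_filter.mpr ⟨hi, hwi⟩)
        · rw [huniv i hi hwi]; trivial
    have haeS : ∀ᵐ ω ∂μ, ∀ i ∈ S', U i ω = W i ω :=
      (Filter.eventually_all_finset S').mpr fun i hi => hae i (hmemS' i hi)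
    have h2 : μ (⋂ i ∈ S', W i ⁻¹' sets i) = μ (⋂ i ∈ S', U i ⁻¹' sets i) := by
      apply measure_congr
      rw [Filter.eventuallyEq_set]
      filter_upwards [haeS] with ω hω
      simp only [Set.mem_iInter, Set.mem_preimage]
      constructor <;> intro h i hi
      · rw [hω i hi]; exact h i hi
      · rw [← hω i hi]; exact h i hi
    have h3 : ∀ i ∈ S', μ (W i ⁻¹' sets i) = μ (U i ⁻¹' sets i) := by
      intro i hi
      apply measure_congr
      rw [Filter.eventuallyEq_set]
      filter_upwards [hae i (hmemS' i hi)] with ω hω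
      simp [Set.mem_preimage, hω]
    have h4 : ∏ i ∈ S, μ (W i ⁻¹' sets i) = ∏ i ∈ S', μ (W i ⁻¹' sets i) := by
      rw [← Finset.prod_filter_mul_prod_filter_not S (fun i => w₀ < i)]
      have hone : ∏ i ∈ S.filter (fun i => ¬ w₀ < i), μ (W i ⁻¹' sets i) = 1 := by
        apply Finset.prod_eq_one
        intro i hi
        obtain ⟨hiS, hni⟩ := Finset.mem_filter.mp hi
        rw [huniv i hiS hni, measure_univ]
      rw [hone, mul_one]
    rw [h1, h2, h4, hind S' (fun i hi => hsets i (Finset.mem_of_mem_filter i hi))]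
    exact Finset.prod_congr rfl fun i hi => (h3 i hi).symm
  · push_neg at hc
    obtain ⟨i, hiS, hni', h0⟩ := hc
    have hni : ¬ w₀ < i := not_lt.mpr hni'
    have hempty : W i ⁻¹' sets i = ∅ := by
      rw [hconst i hni]; ext ω; simp [h0]
    have hL : μ (⋂ j ∈ S, W j ⁻¹' sets j) = 0 := by
      have hsub : (⋂ j ∈ S, W j ⁻¹' sets j) ⊆ W i ⁻¹' sets i := Set.biInter_subset_of_mem hiS
      have h5 : μ (⋂ j ∈ S, W j ⁻¹' sets j) ≤ μ (W i ⁻¹' sets i) := measure_mono hsub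
      rw [hempty, measure_empty] at h5
      exact le_antisymm h5 (by simp)
    rw [hL]
    exact (Finset.prod_eq_zero hiS (by rw [hempty, measure_empty])).symm


lemma aux_integrable_exp (r l : ℝ) (hr : 0 < r) (hl : 0 < l) :
    Integrable (fun x => Real.exp (-(l * x))) (expMeasure r) := by
  have : IsProbabilityMeasure (expMeasure r) := isProbabilityMeasure_expMeasure hr
  constructor
  · exact (Real.continuous_exp.comp (continuous_const.mul continuous_id).neg).aestronglyMeasurable
  · rw [hasFiniteIntegral_iff_ofReal (Filter.Eventually.of_forall fun x => (Real.exp_pos _).le)]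
    rw [aux_lintegral_exp r l hr hl]
    exact ENNReal.ofReal_lt_top

lemma aux_integral_exp (r l : ℝ) (hr : 0 < r) (hl : 0 < l) :
    ∫ x, Real.exp (-(l * x)) ∂(expMeasure r) = r / (r + l) := by
  have : IsProbabilityMeasure (expMeasure r) := isProbabilityMeasure_expMeasure hr
  rw [integral_eq_lintegral_of_nonneg_ae (Filter.Eventually.of_forall fun x => (Real.exp_pos _).le)
    ((by continuity : Continuous fun x : ℝ => Real.exp (-(l * x)))).aestronglyMeasurable,
    aux_lintegral_exp r l hr hl, ENNReal.toReal_ofReal (by positivity)]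


end Aux

/-- Chernoff-type tail bound for sums of independent exponentials with rates
`0 < λ_j ≤ 2Kj` for `j > w₀`. -/
theorem chernoff_tail_bound_exponentials
    {Ω : Type*} [MeasurableSpace Ω] (μ : Measure Ω) [IsProbabilityMeasure μ]
    (K : ℝ) (hK : 0 < K) (w₀ : ℕ)
    (U : ℕ → Ω → ℝ) (lam : ℕ → ℝ)
    (hlam : ∀ j : ℕ, w₀ < j → 0 < lam j ∧ lam j ≤ 2 * K * j)
    (hind : iIndepFun U μ)
    (hlaw : ∀ j : ℕ, w₀ < j → Measure.map (U j) μ = expMeasure (lam j))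
    (t lmb : ℝ) (ht : 0 < t) (hlmb : 0 < lmb)
    (m : ℕ) (hm : w₀ < m) :
    μ {ω | ∑ j ∈ Finset.Icc (w₀ + 1) m, U j ω < t}
      ≤ ENNReal.ofReal (Real.exp (lmb * t) *
          ((2 * K * ((w₀ : ℝ) + 1) + lmb) / (2 * K * (m : ℝ) + lmb))
            ^ (lmb / (2 * K))) := by
  classical
  have hAE : ∀ j, w₀ < j → AEMeasurable (U j) μ := by
    intro j hj
    by_contra h
    have hmap := hlaw j hj
    rw [Measure.map_of_not_aemeasurable h] at hmap
    have hp : IsProbabilityMeasure (expMeasure (lam j)) :=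
      isProbabilityMeasure_expMeasure (hlam j hj).1
    have h0 : (expMeasure (lam j)) Set.univ = 0 := by rw [← hmap]; simp
    rw [hp.measure_univ] at h0
    exact one_ne_zero h0
  set W : ℕ → Ω → ℝ := fun j => if h : w₀ < j then (hAE j h).mk (U j) else fun _ => 0 with hW
  have hWmeas : ∀ j, Measurable (W j) := by
    intro j; rw [hW]; dsimp only; split_ifs with h
    exacts [(hAE j h).measurable_mk, measurable_const]
  have hWae : ∀ j, w₀ < j → U j =ᵐ[μ] W j := by
    intro j h; rw [hW]; dsimp only; rw [dif_pos h]; exact (hAE j h).ae_eq_mk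
  have hWconst : ∀ j, ¬ w₀ < j → W j = fun _ => 0 := by
    intro j h; rw [hW]; dsimp only; rw [dif_neg h]
  have hindW := aux_iIndep_mod w₀ hind hWae hWconst
  have hlawW : ∀ j, w₀ < j → Measure.map (W j) μ = expMeasure (lam j) := fun j h => by
    rw [← Measure.map_congr (hWae j h), hlaw j h]
  have hInt : ∀ j, w₀ < j → Integrable (fun ω => Real.exp (-lmb * W j ω)) μ := by
    intro j h
    have h1 : Integrable (fun x : ℝ => Real.exp (-lmb * x)) (Measure.map (W j) μ) := by
      rw [hlawW j h]
      have := aux_integrable_exp (lam j) lmb (hlam j h).1 hlmb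
      simpa [neg_mul] using this
    exact (integrable_map_measure h1.1 (hWmeas j).aemeasurable).mp h1
  have hmgf_each : ∀ j ∈ Finset.Icc (w₀ + 1) m, mgf (W j) μ (-lmb) = lam j / (lam j + lmb) := by
    intro j hj
    have hwj : w₀ < j := by rw [Finset.mem_Icc] at hj; omega
    have hr := (hlam j hwj).1
    have h2 : mgf (W j) μ (-lmb) = ∫ x, Real.exp (-lmb * x) ∂(Measure.map (W j) μ) := by
      rw [mgf, ← integral_map (hWmeas j).aemeasurable
        ((by continuity : Continuous fun x : ℝ => Real.exp (-lmb * x))).aestronglyMeasurable]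
    rw [h2, hlawW j hwj]
    have := aux_integral_exp (lam j) lmb hr hlmb
    simpa [neg_mul] using this
  have hIntSum : Integrable (fun ω => Real.exp (-lmb * (∑ j ∈ Finset.Icc (w₀+1) m, W j) ω)) μ := by
    refine hindW.integrable_exp_mul_sum hWmeas (fun i hi => ?_)
    exact hInt i (by rw [Finset.mem_Icc] at hi; omega)
  have hchern := measure_le_le_exp_mul_mgf (μ := μ) (X := ∑ j ∈ Finset.Icc (w₀+1) m, W j)
    t (neg_nonpos.mpr hlmb.le) hIntSum
  rw [neg_neg] at hchern
  have hmgfsum : mgf (∑ j ∈ Finset.Icc (w₀+1) m, W j) μ (-lmb)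
      = ∏ j ∈ Finset.Icc (w₀+1) m, lam j / (lam j + lmb) := by
    rw [hindW.mgf_sum hWmeas]
    exact Finset.prod_congr rfl hmgf_each
  have hprod : ∏ j ∈ Finset.Icc (w₀+1) m, lam j / (lam j + lmb)
      ≤ ((2 * K * ((w₀ : ℝ) + 1) + lmb) / (2 * K * (m : ℝ) + lmb)) ^ (lmb / (2 * K)) := by
    have := aux_prod_bound (2 * K) lmb (by positivity) hlmb lam (w₀ + 1) m (by omega)
      (fun j hj => hlam j (by rw [Finset.mem_Icc] at hj; omega))
    push_cast at this
    exact this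
  have hset1 : μ {ω | ∑ j ∈ Finset.Icc (w₀+1) m, U j ω < t}
      = μ {ω | ∑ j ∈ Finset.Icc (w₀+1) m, W j ω < t} := by
    apply measure_congr
    rw [Filter.eventuallyEq_set]
    have haeS : ∀ᵐ ω ∂μ, ∀ i ∈ Finset.Icc (w₀+1) m, U i ω = W i ω :=
      (Filter.eventually_all_finset _).mpr fun i hi =>
        hWae i (by rw [Finset.mem_Icc] at hi; omega)
    filter_upwards [haeS] with ω hω
    have hsum : ∑ j ∈ Finset.Icc (w₀+1) m, U j ω = ∑ j ∈ Finset.Icc (w₀+1) m, W j ω :=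
      Finset.sum_congr rfl hω
    simp only [Set.mem_setOf_eq, hsum]
  have hsub : {ω | ∑ j ∈ Finset.Icc (w₀+1) m, W j ω < t}
      ⊆ {ω | (∑ j ∈ Finset.Icc (w₀+1) m, W j) ω ≤ t} := by
    intro ω hω
    simp only [Set.mem_setOf_eq, Finset.sum_apply] at *
    exact le_of_lt hω
  calc μ {ω | ∑ j ∈ Finset.Icc (w₀+1) m, U j ω < t}
      = μ {ω | ∑ j ∈ Finset.Icc (w₀+1) m, W j ω < t} := hset1
    _ ≤ μ {ω | (∑ j ∈ Finset.Icc (w₀+1) m, W j) ω ≤ t} := measure_mono hsub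
    _ = ENNReal.ofReal ((μ {ω | (∑ j ∈ Finset.Icc (w₀+1) m, W j) ω ≤ t}).toReal) :=
        (ENNReal.ofReal_toReal (measure_ne_top μ _)).symm
    _ ≤ ENNReal.ofReal (Real.exp (lmb * t) * mgf (∑ j ∈ Finset.Icc (w₀+1) m, W j) μ (-lmb)) :=
        ENNReal.ofReal_le_ofReal hchern
    _ ≤ _ := by
        apply ENNReal.ofReal_le_ofReal
        rw [hmgfsum]
        exact mul_le_mul_of_nonneg_left hprod (Real.exp_pos _).le
end

section
/- A rate function satisfying the divergence condition (A2)(a) but violating the linear-growth condition (A2)(b): Define ι(x) = x(1+2^x) for x ∈ ℕ, let x₀ = 2 and x_{j+1} = ι(x_j) for j ≥ 0, and define B(N) = x_j · 2^{x_j} for all integers N with x_j ≤ N < x_{j+1}. Then Σ_{N≥2} 1/B(N) = ∞ (the sum of 1/B(N) over each block [x_j, x_{j+1}) equals 1), while B(x_j)/x_j² = 2^{x_j}/x_j → ∞ as j → ∞; in particular limsup_{N→∞} B(N)/N² = ∞. -/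
open Filter

private lemma sq_le_two_pow' : ∀ n, 4 ≤ n → n ^ 2 ≤ 2 ^ n := by
  intro n hn
  induction n with
  | zero => omega
  | succ m ih =>
    rcases Nat.lt_or_ge m 4 with h | h
    · have hm : m = 3 := by omega
      subst hm; norm_num
    · have := ih h
      have h2 : (m + 1) ^ 2 ≤ 2 * m ^ 2 := by nlinarith
      calc (m + 1) ^ 2 ≤ 2 * m ^ 2 := h2
        _ ≤ 2 * 2 ^ m := by omega
        _ = 2 ^ (m + 1) := by ring

/-- A rate function satisfying the divergence condition (A2)(a) but violating
the linear-growth condition (A2)(b): with `ι(x) = x(1+2^x)`, `x₀ = 2`,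
`x_{j+1} = ι(x_j)` and `B(N) = x_j·2^{x_j}` for `x_j ≤ N < x_{j+1}`, the sum of
`1/B(N)` over each block equals `1` (so `Σ_{N≥2} 1/B(N) = ∞`), while
`B(x_j)/x_j² = 2^{x_j}/x_j → ∞`; in particular `limsup_N B(N)/N² = ∞`. -/
theorem rate_function_A2a_not_A2b
    (xs : ℕ → ℕ) (hxs0 : xs 0 = 2)
    (hxsrec : ∀ j, xs (j + 1) = xs j * (1 + 2 ^ xs j))
    (B : ℕ → ℝ)
    (hB : ∀ j N, xs j ≤ N → N < xs (j + 1) → B N = (xs j : ℝ) * 2 ^ xs j) :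
    (∀ j, ∑ N ∈ Finset.Ico (xs j) (xs (j + 1)), 1 / B N = 1) ∧
    (¬ Summable fun N : ℕ => 1 / B (N + 2)) ∧
    (∀ j, B (xs j) / (xs j : ℝ) ^ 2 = 2 ^ xs j / (xs j : ℝ)) ∧
    Tendsto (fun j => B (xs j) / (xs j : ℝ) ^ 2) atTop atTop ∧
    (∀ C : ℝ, ∀ M : ℕ, ∃ N : ℕ, M ≤ N ∧ C < B N / (N : ℝ) ^ 2) := by
  -- basic growth facts
  have hstep : ∀ j, xs (j + 1) = xs j + xs j * 2 ^ xs j := by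
    intro j; rw [hxsrec j]; ring
  have hpos : ∀ j, 2 ≤ xs j := by
    intro j
    induction j with
    | zero => omega
    | succ m ih =>
      have h := hstep m
      set t := xs m * 2 ^ xs m
      omega
  have hlt : ∀ j, xs j < xs (j + 1) := by
    intro j
    have h := hstep j
    have ht : 0 < xs j * 2 ^ xs j :=
      Nat.mul_pos (by have := hpos j; omega) (Nat.pow_pos (by norm_num))
    set t := xs j * 2 ^ xs j
    omega
  have hgrow : ∀ j, j + 2 ≤ xs j := by
    intro j
    induction j with
    | zero => omega
    | succ m ih => have := hlt m; omega
  have hmono0 : ∀ k, xs 0 ≤ xs k := by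
    intro k
    induction k with
    | zero => exact le_rfl
    | succ n ihn => exact ihn.trans (hlt n).le
  -- each N ≥ 2 lies in a block
  have hblock : ∀ N, 2 ≤ N → ∃ j, xs j ≤ N ∧ N < xs (j + 1) := by
    intro N hN
    have hex : ∃ j, N < xs j := ⟨N, by have := hgrow N; omega⟩
    classical
    have hj0 : N < xs (Nat.find hex) := Nat.find_spec hex
    have hj0pos : Nat.find hex ≠ 0 := by
      intro h; rw [h, hxs0] at hj0; omega
    obtain ⟨j, hj⟩ := Nat.exists_eq_succ_of_ne_zero hj0pos
    have hle : ¬ N < xs j := Nat.find_min hex (by omega)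
    refine ⟨j, by omega, ?_⟩
    have : Nat.find hex = j + 1 := hj
    rw [← this]; exact hj0
  have hBpos : ∀ N, 2 ≤ N → 0 < B N := by
    intro N hN
    obtain ⟨j, h1, h2⟩ := hblock N hN
    rw [hB j N h1 h2]
    have hx : (0 : ℝ) < (xs j : ℝ) := by exact_mod_cast (by have := hpos j; omega : 0 < xs j)
    positivity
  -- Part 1: block sums equal 1
  have part1 : ∀ j, ∑ N ∈ Finset.Ico (xs j) (xs (j + 1)), 1 / B N = 1 := by
    intro j
    have hx : (0 : ℝ) < (xs j : ℝ) := by exact_mod_cast (by have := hpos j; omega : 0 < xs j)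
    have hc : (xs j : ℝ) * 2 ^ xs j ≠ 0 := by positivity
    have hrw : ∑ N ∈ Finset.Ico (xs j) (xs (j + 1)), 1 / B N
        = ∑ _N ∈ Finset.Ico (xs j) (xs (j + 1)), 1 / ((xs j : ℝ) * 2 ^ xs j) := by
      apply Finset.sum_congr rfl
      intro N hN
      rw [Finset.mem_Ico] at hN
      rw [hB j N hN.1 hN.2]
    rw [hrw, Finset.sum_const, Nat.card_Ico, nsmul_eq_mul]
    have hcard : xs (j + 1) - xs j = xs j * 2 ^ xs j := by
      have := hstep j; omega
    rw [hcard]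
    push_cast
    field_simp
  -- Part 3 equation (used repeatedly)
  have part3 : ∀ j, B (xs j) / (xs j : ℝ) ^ 2 = 2 ^ xs j / (xs j : ℝ) := by
    intro j
    have h0 : (xs j : ℝ) ≠ 0 := by
      exact_mod_cast (by have := hpos j; omega : xs j ≠ 0)
    rw [hB j (xs j) le_rfl (hlt j)]
    field_simp
  have hlower : ∀ j : ℕ, 2 ≤ j → (j : ℝ) ≤ B (xs j) / (xs j : ℝ) ^ 2 := by
    intro j hj
    rw [part3 j]
    have hx4 : 4 ≤ xs j := by have := hgrow j; omega
    have h1 : ((xs j : ℝ)) ^ 2 ≤ 2 ^ xs j := by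
      exact_mod_cast sq_le_two_pow' (xs j) hx4
    have hxpos : (0 : ℝ) < (xs j : ℝ) := by
      exact_mod_cast (by omega : 0 < xs j)
    have h2 : (xs j : ℝ) ≤ 2 ^ xs j / (xs j : ℝ) := by
      rw [le_div_iff₀ hxpos]
      nlinarith
    have h3 : (j : ℝ) ≤ (xs j : ℝ) := by
      exact_mod_cast (by have := hgrow j; omega : j ≤ xs j)
    linarith
  refine ⟨part1, ?_, part3, ?_, ?_⟩
  -- Part 2: non-summability
  · intro hsum
    have hnn : ∀ N : ℕ, 0 ≤ 1 / B (N + 2) := by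
      intro N
      have := hBpos (N + 2) (by omega)
      positivity
    have hpartial : ∀ j, ∑ N ∈ Finset.Ico (xs 0) (xs (j + 1)), 1 / B N = (j : ℝ) + 1 := by
      intro j
      induction j with
      | zero => simpa using part1 0
      | succ m ih =>
        rw [← Finset.sum_Ico_consecutive _ (hmono0 (m + 1)) (hlt (m + 1)).le, ih,
          part1 (m + 1)]
        push_cast; ring
    have hbound : ∀ j : ℕ, ((j : ℝ) + 1) ≤ ∑' N : ℕ, 1 / B (N + 2) := by
      intro j
      have h1 : ∑ N ∈ Finset.range (xs (j + 1) - 2), 1 / B (N + 2)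
          = ∑ N ∈ Finset.Ico (xs 0) (xs (j + 1)), 1 / B N := by
        rw [hxs0, Finset.sum_Ico_eq_sum_range]
        apply Finset.sum_congr rfl
        intro k _
        rw [Nat.add_comm 2 k]
      calc ((j : ℝ) + 1) = ∑ N ∈ Finset.range (xs (j + 1) - 2), 1 / B (N + 2) := by
            rw [h1, hpartial]
        _ ≤ ∑' N : ℕ, 1 / B (N + 2) := Summable.sum_le_tsum _ (fun i _ => hnn i) hsum
    obtain ⟨j, hj⟩ := exists_nat_gt (∑' N : ℕ, 1 / B (N + 2))
    have := hbound j
    linarith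
  -- Part 4
  · apply tendsto_atTop_mono' _ (eventually_atTop.2 ⟨2, fun j hj => hlower j hj⟩)
      tendsto_natCast_atTop_atTop
  -- Part 5
  · intro C M
    obtain ⟨j0, hj0⟩ := exists_nat_gt C
    set j := max (max j0 M) 2 with hjdef
    refine ⟨xs j, ?_, ?_⟩
    · have h1 := hgrow j
      have h2 : M ≤ j := le_trans (le_max_right j0 M) (le_max_left _ 2)
      omega
    · have h1 := hlower j (le_max_right _ 2)
      have hjj : j0 ≤ j := le_trans (le_max_left j0 M) (le_max_left _ 2)
      have h2 : (j0 : ℝ) ≤ (j : ℝ) := by exact_mod_cast hjj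
      linarith
end

section
/- Block-swap increment identity for the inversion count (long-range branching move): Let x ∈ 𝒮_hgt with interface y, let l ≥ 1 be an integer and let k be a half-integer such that x_m = 1 and x_{m−l} = 0 for every m ∈ {k, k+1, …, k+l−1}. Let x' agree with x except that x'_{m−l} = 1 and x'_m = 0 for those m. Then f_CD(x') − f_CD(x) = ch(y)·l². Symmetrically, if x_m = 0 and x_{m−l} = 1 for every m ∈ {k, …, k+l−1} and x' interchanges the two blocks, then f_CD(x') − f_CD(x) = −ch(y)·l². In particular a block swap of range l changes f_CD by at most l² in absolute value. -/
open scoped BigOperators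

/- Half-integers `k ∈ ℤ + 1/2` are represented by integers `j`, via `k = j + 1/2`.
A height configuration is a function `x : ℤ → ℤ` with values in `{0,1}`,
eventually constant in both directions with different limiting values. -/
def IsHeight (x : ℤ → ℤ) : Prop :=
  (∀ k, x k = 0 ∨ x k = 1) ∧
  ∃ a b : ℤ, a ≠ b ∧ (∃ N : ℤ, ∀ k ≤ N, x k = a) ∧ (∃ M : ℤ, ∀ k, M ≤ k → x k = b)

/-- The interface of a height configuration: `y i = x (i+1/2) - x (i-1/2)`. -/
def itf (x : ℤ → ℤ) : ℤ → ℤ := fun i => x i - x (i - 1)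

/-- The charge of a particle configuration. -/
noncomputable def charge (y : ℤ → ℤ) : ℤ := ∑ᶠ i, y i

/-- The particle number of a particle configuration. -/
noncomputable def pnum (y : ℤ → ℤ) : ℤ := ∑ᶠ i, |y i|

/-- `κ = (1 + ch(y))/2`. -/
noncomputable def kappa (x : ℤ → ℤ) : ℤ := (1 + charge (itf x)) / 2

/-- The inversion count `f_CD`. -/
noncomputable def fCD (x : ℤ → ℤ) : ℕ :=
  Nat.card {p : ℤ × ℤ // p.1 < p.2 ∧ x p.1 = kappa x ∧ x p.2 = 1 - kappa x}

/-- Flip the height at position `k`. -/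
def flipAt (x : ℤ → ℤ) (k : ℤ) : ℤ → ℤ := Function.update x k (1 - x k)

/-- Interchange the heights at positions `k` and `k+1`. -/
def swapAt (x : ℤ → ℤ) (k : ℤ) : ℤ → ℤ :=
  fun j => if j = k then x (k + 1) else if j = k + 1 then x k else x j

/-- `S(k) = Σ_{l<k} 1{x_l = κ} − Σ_{l>k} 1{x_l = 1−κ}`. -/
noncomputable def Sfun (x : ℤ → ℤ) (k : ℤ) : ℤ :=
  (Nat.card {l : ℤ // l < k ∧ x l = kappa x} : ℤ)
    - (Nat.card {l : ℤ // k < l ∧ x l = 1 - kappa x} : ℤ)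

/-- The spin-flip part of the generator applied to `f_CD`. -/
noncomputable def Gflip (p q : ℤ → ℝ) (x : ℤ → ℤ) : ℝ :=
  ∑ᶠ k : ℤ, (p k + q (k + 1)) * ((fCD (flipAt x k) : ℝ) - (fCD x : ℝ))

/-- The exclusion part of the generator applied to `f_CD`. -/
noncomputable def Gexcl (bp bm : ℤ → ℝ) (x : ℤ → ℤ) : ℝ :=
  ∑ᶠ k : ℤ,
    ((if x k = 0 ∧ x (k + 1) = 1 then bp (k + 1) else 0)
      + (if x k = 1 ∧ x (k + 1) = 0 then bm (k + 1) else 0))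
    * ((fCD (swapAt x k) : ℝ) - (fCD x : ℝ))

/-- Interchange the block of positions `[k, k+l)` with the block `[k−l, k)`. -/
def blockSwap (x : ℤ → ℤ) (k l : ℤ) : ℤ → ℤ :=
  fun j => if k ≤ j ∧ j < k + l then x (j - l)
    else if k - l ≤ j ∧ j < k then x (j + l) else x j

-- auxiliary
theorem bsw_tele (f : ℤ → ℤ) (a : ℤ) : ∀ b, a ≤ b →
    ∑ i ∈ Finset.Ioc a b, (f i - f (i-1)) = f b - f a := by
  refine Int.le_induction ?_ ?_
  · simp
  · intro n hn ih
    have : Finset.Ioc a (n+1) = insert (n+1) (Finset.Ioc a n) := by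
      ext j; simp only [Finset.mem_Ioc, Finset.mem_insert]; omega
    rw [this, Finset.sum_insert (by simp), ih]
    ring_nf

theorem charge_of_limits (x : ℤ → ℤ) (a b N M : ℤ)
    (ha : ∀ j ≤ N, x j = a) (hb : ∀ j, M ≤ j → x j = b) :
    charge (itf x) = b - a := by
  set N0 := min N M with hN0
  set M0 := max N M with hM0
  have hsupp : Function.support (itf x) ⊆ ↑(Finset.Ioc N0 M0) := by
    intro i hi
    simp only [Function.mem_support, itf] at hi
    simp only [Finset.coe_Ioc, Set.mem_Ioc]
    by_contra h
    rcases not_and_or.mp h with h' | h'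
    · push_neg at h'
      have h1 : i ≤ N := by omega
      have h2 : i - 1 ≤ N := by omega
      rw [ha _ h1, ha _ h2] at hi; omega
    · push_neg at h'
      have h1 : M ≤ i := by omega
      have h2 : M ≤ i - 1 := by omega
      rw [hb _ h1, hb _ h2] at hi; omega
  rw [charge, finsum_eq_sum_of_support_subset _ hsupp]
  have := bsw_tele x N0 M0 (le_trans (min_le_left _ _) (le_max_left _ _))
  simp only [itf]
  rw [this, ha N0 (min_le_left _ _), hb M0 (le_max_right _ _)]

def bsig (k l : ℤ) : ℤ → ℤ := fun j =>
  if k ≤ j ∧ j < k + l then j - l else if k - l ≤ j ∧ j < k then j + l else j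

theorem blockSwap_eq (x : ℤ → ℤ) (k l j : ℤ) :
    blockSwap x k l j = x (bsig k l j) := by
  unfold blockSwap bsig; split_ifs <;> rfl

theorem bsig_invol (k l : ℤ) (hl : 0 < l) (j : ℤ) : bsig k l (bsig k l j) = j := by
  unfold bsig; split_ifs <;> omega

theorem bsig_lt (k l : ℤ) (hl : 0 < l) {i j : ℤ} (hij : i < j)
    (h : ¬((k - l ≤ i ∧ i < k) ∧ (k ≤ j ∧ j < k + l))) :
    bsig k l i < bsig k l j := by
  unfold bsig; split_ifs <;> omega

theorem bsig_not_cross (k l : ℤ) (hl : 0 < l) {i j : ℤ} (hij : i < j) :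
    ¬((k - l ≤ bsig k l i ∧ bsig k l i < k) ∧ (k ≤ bsig k l j ∧ bsig k l j < k + l)) := by
  unfold bsig; split_ifs <;> omega

theorem height_data (x : ℤ → ℤ) (hx : IsHeight x) :
    ∃ b N M : ℤ, (b = 0 ∨ b = 1) ∧ (∀ j ≤ N, x j = 1 - b) ∧ (∀ j, M ≤ j → x j = b) ∧
      kappa x = b ∧ charge (itf x) = 2 * b - 1 := by
  obtain ⟨hv, a, b, hab, ⟨N, hN⟩, ⟨M, hM⟩⟩ := hx
  have ha01 : a = 0 ∨ a = 1 := (hN N le_rfl) ▸ hv N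
  have hb01 : b = 0 ∨ b = 1 := (hM M le_rfl) ▸ hv M
  have hab1 : a = 1 - b := by omega
  have hch : charge (itf x) = b - a := charge_of_limits x a b N M hN hM
  refine ⟨b, N, M, hb01, by simpa [hab1] using hN, hM, ?_, by omega⟩
  rw [kappa, hch]; omega

theorem main_count (x : ℤ → ℤ) (hx : IsHeight x) (l : ℤ) (hl : 1 ≤ l) (k v : ℤ)
    (hblk : ∀ m, k ≤ m → m < k + l → x m = v ∧ x (m - l) = 1 - v) :
    (fCD (blockSwap x k l) : ℤ) - (fCD x : ℤ)
      = if kappa x = v then l ^ 2 else -l ^ 2 := by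
  obtain ⟨b, N, M, hb01, hN, hM, hkb, hch⟩ := height_data x hx
  have hv01 : v = 0 ∨ v = 1 := by
    have := (hblk k le_rfl (by omega)).1 ▸ hx.1 k
    omega
  set x' := blockSwap x k l with hx'
  have hx'out : ∀ j, (j < k - l ∨ k + l ≤ j) → x' j = x j := by
    intro j hj
    rw [hx', blockSwap]
    split_ifs <;> first | omega | rfl
  -- limits of x'
  have hN' : ∀ j ≤ min N (k - l - 1), x' j = 1 - b := by
    intro j hj
    rw [hx'out j (by omega)]; exact hN j (by omega)
  have hM' : ∀ j, max M (k + l) ≤ j → x' j = b := by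
    intro j hj
    rw [hx'out j (by omega)]; exact hM j (by omega)
  have hch' : charge (itf x') = b - (1 - b) := charge_of_limits x' (1-b) b _ _ hN' hM'
  have hkb' : kappa x' = b := by rw [kappa, hch']; omega
  -- the sets
  set Sx : Set (ℤ × ℤ) := {p | p.1 < p.2 ∧ x p.1 = b ∧ x p.2 = 1 - b} with hSx
  set Sx' : Set (ℤ × ℤ) := {p | p.1 < p.2 ∧ x' p.1 = b ∧ x' p.2 = 1 - b} with hSx'
  have hfx : (fCD x : ℤ) = Sx.ncard := by
    rw [fCD, hkb]
    norm_cast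
  have hfx' : (fCD x' : ℤ) = Sx'.ncard := by
    rw [fCD, hkb']
    norm_cast
  -- cross region
  set Cr : Set (ℤ × ℤ) := Set.Ico (k-l) k ×ˢ Set.Ico k (k+l) with hCr
  have hCrmem : ∀ p : ℤ × ℤ, p ∈ Cr ↔ ((k - l ≤ p.1 ∧ p.1 < k) ∧ (k ≤ p.2 ∧ p.2 < k + l)) := by
    intro p; simp [hCr, Set.mem_prod, Set.mem_Ico]
  have hCrfin : Cr.Finite := (Set.finite_Ico _ _).prod (Set.finite_Ico _ _)
  have hCrcard : (Cr.ncard : ℤ) = l ^ 2 := by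
    have : Cr = ↑(Finset.Ico (k-l) k ×ˢ Finset.Ico k (k+l)) := by
      rw [hCr, Finset.coe_product, Finset.coe_Ico, Finset.coe_Ico]
    rw [this, Set.ncard_coe_finset, Finset.card_product, Int.card_Ico, Int.card_Ico]
    push_cast
    rw [Int.toNat_of_nonneg (by omega), Int.toNat_of_nonneg (by omega)]
    ring
  -- finiteness of Sx, Sx'
  have hfinS : ∀ (z : ℤ → ℤ) (N0 M0 : ℤ), (∀ j ≤ N0, z j = 1 - b) → (∀ j, M0 ≤ j → z j = b) →
      {p : ℤ × ℤ | p.1 < p.2 ∧ z p.1 = b ∧ z p.2 = 1 - b}.Finite := by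
    intro z N0 M0 h1 h2
    apply Set.Finite.subset ((Set.finite_Ioo N0 M0).prod (Set.finite_Ioo N0 M0))
    rintro ⟨p1, p2⟩ ⟨hlt, hzb, hza⟩
    have hp1 : N0 < p1 := by
      by_contra h; push_neg at h
      rw [h1 p1 h] at hzb; omega
    have hp2 : p2 < M0 := by
      by_contra h; push_neg at h
      rw [h2 p2 (by omega)] at hza; omega
    exact ⟨⟨hp1, by omega⟩, ⟨by omega, hp2⟩⟩
  have hSxfin : Sx.Finite := hfinS x N M hN hM
  have hSx'fin : Sx'.Finite := hfinS x' _ _ hN' hM'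
  -- the bijection on the non-cross parts
  have hlpos : 0 < l := by omega
  set F : ℤ × ℤ → ℤ × ℤ := fun p => (bsig k l p.1, bsig k l p.2) with hF
  have hFinvol : ∀ p, F (F p) = p := by
    intro p; simp [hF, bsig_invol k l hlpos]
  have hFinj : Function.Injective F := Function.LeftInverse.injective hFinvol
  have hximg : ∀ j, x' j = x (bsig k l j) := fun j => blockSwap_eq x k l j
  have hximg' : ∀ j, x j = x' (bsig k l j) := by
    intro j
    rw [hximg, bsig_invol k l hlpos]
  have himg : F '' (Sx' \ Cr) = Sx \ Cr := by
    ext q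
    constructor
    · rintro ⟨p, ⟨⟨hlt, h1, h2⟩, hpc⟩, rfl⟩
      rw [hCrmem] at hpc
      refine ⟨⟨bsig_lt k l hlpos hlt hpc, ?_, ?_⟩, ?_⟩
      · rw [← hximg]; exact h1
      · rw [← hximg]; exact h2
      · rw [hCrmem]; exact bsig_not_cross k l hlpos hlt
    · rintro ⟨⟨hlt, h1, h2⟩, hqc⟩
      rw [hCrmem] at hqc
      refine ⟨F q, ⟨⟨bsig_lt k l hlpos hlt hqc, ?_, ?_⟩, ?_⟩, hFinvol q⟩
      · rw [hF]; dsimp only; rw [← hximg']; exact h1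
      · rw [hF]; dsimp only; rw [← hximg']; exact h2
      · rw [hCrmem]; exact bsig_not_cross k l hlpos hlt
  have hdiffcard : (Sx' \ Cr).ncard = (Sx \ Cr).ncard := by
    rw [← himg, Set.ncard_image_of_injective _ hFinj]
  have hsplit : ∀ (S : Set (ℤ × ℤ)), S.Finite →
      S.ncard = (S ∩ Cr).ncard + (S \ Cr).ncard :=
    fun S hS => (Set.ncard_inter_add_ncard_diff_eq_ncard S Cr hS).symm
  -- block values
  have hblkB : ∀ j, k - l ≤ j → j < k → x j = 1 - v := by
    intro j h1 h2
    have := (hblk (j + l) (by omega) (by omega)).2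
    simpa using this
  have hblkA : ∀ j, k ≤ j → j < k + l → x j = v := fun j h1 h2 => (hblk j h1 h2).1
  have hx'B : ∀ j, k - l ≤ j → j < k → x' j = v := by
    intro j h1 h2
    rw [hximg]
    have : bsig k l j = j + l := by unfold bsig; split_ifs <;> omega
    rw [this]; exact hblkA _ (by omega) (by omega)
  have hx'A : ∀ j, k ≤ j → j < k + l → x' j = 1 - v := by
    intro j h1 h2
    rw [hximg]
    have : bsig k l j = j - l := by unfold bsig; split_ifs <;> omega
    rw [this]; exact hblkB _ (by omega) (by omega)
  by_cases hbv : b = v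
  · -- κ = v : x gains nothing in Cr, x' contains all of Cr
    have hSxCr : Sx ∩ Cr = ∅ := by
      ext p
      simp only [Set.mem_inter_iff, Set.mem_empty_iff_false, iff_false]
      rintro ⟨⟨hlt, h1, h2⟩, hpc⟩
      rw [hCrmem] at hpc
      have := hblkB p.1 hpc.1.1 hpc.1.2
      omega
    have hSx'Cr : Sx' ∩ Cr = Cr := by
      apply Set.inter_eq_right.mpr
      intro p hp
      rw [hCrmem] at hp
      exact ⟨by omega, by rw [hx'B p.1 hp.1.1 hp.1.2]; omega,
        by rw [hx'A p.2 hp.2.1 hp.2.2]; omega⟩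
    rw [if_pos (hkb.trans hbv)]
    rw [hfx, hfx', hsplit Sx hSxfin, hsplit Sx' hSx'fin, hSxCr, hSx'Cr, hdiffcard]
    push_cast
    rw [Set.ncard_empty]
    omega
  · -- κ ≠ v : x contains all of Cr, x' gains nothing
    have hSxCr : Sx ∩ Cr = Cr := by
      apply Set.inter_eq_right.mpr
      intro p hp
      rw [hCrmem] at hp
      exact ⟨by omega, by rw [hblkB p.1 hp.1.1 hp.1.2]; omega,
        by rw [hblkA p.2 hp.2.1 hp.2.2]; omega⟩
    have hSx'Cr : Sx' ∩ Cr = ∅ := by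
      ext p
      simp only [Set.mem_inter_iff, Set.mem_empty_iff_false, iff_false]
      rintro ⟨⟨hlt, h1, h2⟩, hpc⟩
      rw [hCrmem] at hpc
      have := hx'B p.1 hpc.1.1 hpc.1.2
      omega
    rw [if_neg (by omega : ¬ kappa x = v)]
    rw [hfx, hfx', hsplit Sx hSxfin, hsplit Sx' hSx'fin, hSxCr, hSx'Cr, hdiffcard]
    push_cast
    rw [Set.ncard_empty]
    omega

/-- Block-swap increment identity for the inversion count (long-range branching
move): swapping a block of `l` ones leftward past a block of `l` zeros changes
`f_CD` by `ch(y)·l²`, the mirror move changes it by `−ch(y)·l²`, and in either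
case the change is at most `l²` in absolute value. -/
theorem block_swap_increment_identity
    (x : ℤ → ℤ) (hx : IsHeight x) (l : ℤ) (hl : 1 ≤ l) (k : ℤ) :
    ((∀ m, k ≤ m → m < k + l → x m = 1 ∧ x (m - l) = 0) →
      (fCD (blockSwap x k l) : ℤ) - (fCD x : ℤ) = charge (itf x) * l ^ 2) ∧
    ((∀ m, k ≤ m → m < k + l → x m = 0 ∧ x (m - l) = 1) →
      (fCD (blockSwap x k l) : ℤ) - (fCD x : ℤ) = - (charge (itf x) * l ^ 2)) ∧
    (((∀ m, k ≤ m → m < k + l → x m = 1 ∧ x (m - l) = 0) ∨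
      (∀ m, k ≤ m → m < k + l → x m = 0 ∧ x (m - l) = 1)) →
      |(fCD (blockSwap x k l) : ℤ) - (fCD x : ℤ)| ≤ l ^ 2) := by
  obtain ⟨b, N, M, hb01, hN, hM, hkb, hch⟩ := height_data x hx
  have h1 : (∀ m, k ≤ m → m < k + l → x m = 1 ∧ x (m - l) = 0) →
      (fCD (blockSwap x k l) : ℤ) - (fCD x : ℤ) = charge (itf x) * l ^ 2 := by
    intro h
    have hc := main_count x hx l hl k 1 (by
      intro m hm1 hm2; have := h m hm1 hm2; constructor <;> omega)
    rcases hb01 with hb | hb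
    · rw [if_neg (by omega)] at hc
      rw [hc, hch, hb]; ring
    · rw [if_pos (by omega)] at hc
      rw [hc, hch, hb]; ring
  have h2 : (∀ m, k ≤ m → m < k + l → x m = 0 ∧ x (m - l) = 1) →
      (fCD (blockSwap x k l) : ℤ) - (fCD x : ℤ) = - (charge (itf x) * l ^ 2) := by
    intro h
    have hc := main_count x hx l hl k 0 (by
      intro m hm1 hm2; have := h m hm1 hm2; constructor <;> omega)
    rcases hb01 with hb | hb
    · rw [if_pos (by omega)] at hc
      rw [hc, hch, hb]; ring
    · rw [if_neg (by omega)] at hc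
      rw [hc, hch, hb]; ring
  refine ⟨h1, h2, ?_⟩
  have habs : |charge (itf x)| = 1 := by
    rw [hch]; rcases hb01 with hb | hb <;> rw [hb] <;> norm_num
  have hl2 : |l ^ 2| = l ^ 2 := abs_of_nonneg (sq_nonneg l)
  rintro (h | h)
  · rw [h1 h, abs_mul, habs, one_mul, hl2]
  · rw [h2 h, abs_neg, abs_mul, habs, one_mul, hl2]
end

section
/- Identity for the l-range exclusion contribution: Let x ∈ 𝒮_hgt with interface y, let l ≥ 2 be an integer, and let b⊕_{·,l}, b⊖_{·,l} be nonnegative l-range branching rates. Call a half-integer k ⊕-eligible if x_m = 1 and x_{m−l} = 0 for all m ∈ {k, …, k+l−1}, and ⊖-eligible if x_m = 0 and x_{m−l} = 1 for all m ∈ {k, …, k+l−1}. Define (G^{ex_l} f_CD)(x) = Σ_k [b⊕_{k−1/2,l}(y)·(Π_{m=k}^{k+l−1} x_m(1−x_{m−l}))·(f_CD(x with the two blocks interchanged) − f_CD(x)) + b⊖_{k−1/2,l}(y)·(Π_{m=k}^{k+l−1} (1−x_m)x_{m−l})·(f_CD(x with the two blocks interchanged) − f_CD(x))] (a sum with finitely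 many nonzero terms). Then (G^{ex_l} f_CD)(x) = ch(y)·l²·(Σ_{k ⊕-eligible} b⊕_{k−1/2,l}(y) − Σ_{k ⊖-eligible} b⊖_{k−1/2,l}(y)). In particular, if all these rates are bounded by B̃(l), then |(G^{ex_l} f_CD)(x)| ≤ l²·B̃(l)·|y|. -/
open scoped BigOperators

/-- `k` (representing the half-integer `k + 1/2`) is ⊕-eligible for range `l`:
a block of `l` ones immediately preceded by a block of `l` zeros. -/
def PlusEligible (x : ℤ → ℤ) (l k : ℤ) : Prop :=
  ∀ m, k ≤ m → m < k + l → x m = 1 ∧ x (m - l) = 0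

/-- `k` is ⊖-eligible for range `l`. -/
def MinusEligible (x : ℤ → ℤ) (l k : ℤ) : Prop :=
  ∀ m, k ≤ m → m < k + l → x m = 0 ∧ x (m - l) = 1

open scoped Classical in
/-- The `l`-range exclusion part of the generator applied to `f_CD`. -/
noncomputable def GexL (bpl bml : ℤ → ℝ) (x : ℤ → ℤ) (l : ℤ) : ℝ :=
  ∑ᶠ k : ℤ,
    ((if PlusEligible x l k then bpl k else 0)
      + (if MinusEligible x l k then bml k else 0))
    * ((fCD (blockSwap x k l) : ℝ) - (fCD x : ℝ))

section Aux

private lemma telescope_Ioc (f : ℤ → ℤ) (N : ℤ) :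
    ∀ M, N ≤ M → ∑ i ∈ Finset.Ioc N M, (f i - f (i - 1)) = f M - f N := by
  refine Int.le_induction ?_ ?_
  · simp
  · intro M hM ih
    have h1 : Finset.Ioc N (M + 1) = insert (M + 1) (Finset.Ioc N M) := by
      ext j; simp only [Finset.mem_Ioc, Finset.mem_insert]; omega
    rw [h1, Finset.sum_insert (by simp), ih]
    have h2 : M + 1 - 1 = M := by ring
    rw [h2]; ring

private lemma charge_eq_of_tails (x : ℤ → ℤ) (a b N M : ℤ) (hNM : N ≤ M)
    (hN : ∀ k ≤ N, x k = a) (hM : ∀ k, M ≤ k → x k = b) :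
    charge (itf x) = b - a := by
  have hsupp : Function.support (itf x) ⊆ ↑(Finset.Ioc N M) := by
    intro i hi
    simp only [Function.mem_support, itf] at hi
    simp only [Finset.coe_Ioc, Set.mem_Ioc]
    by_contra h
    rcases lt_or_ge N i with h1 | h1
    · have h2 : M ≤ i - 1 := by omega
      rw [hM i (by omega), hM (i - 1) h2] at hi; simp at hi
    · rw [hN i h1, hN (i - 1) (by omega)] at hi; simp at hi
  rw [charge, finsum_eq_sum_of_support_subset _ hsupp]
  have := telescope_Ioc x N M hNM
  simp only [itf]
  rw [this, hM M le_rfl, hN N le_rfl]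

private lemma pnum_eq_sum (x : ℤ → ℤ) (a b N M : ℤ)
    (hN : ∀ k ≤ N, x k = a) (hM : ∀ k, M ≤ k → x k = b) :
    pnum (itf x) = ∑ i ∈ Finset.Ioc N M, |itf x i| := by
  have hsupp : Function.support (fun i => |itf x i|) ⊆ ↑(Finset.Ioc N M) := by
    intro i hi
    simp only [Function.mem_support, itf, ne_eq, abs_eq_zero] at hi
    simp only [Finset.coe_Ioc, Set.mem_Ioc]
    by_contra h
    rcases lt_or_ge N i with h1 | h1
    · rw [hM i (by omega), hM (i - 1) (by omega)] at hi; simp at hi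
    · rw [hN i h1, hN (i - 1) (by omega)] at hi; simp at hi
  rw [pnum, finsum_eq_sum_of_support_subset _ hsupp]

private def sg (k l : ℤ) : ℤ → ℤ := fun j =>
  if k ≤ j ∧ j < k + l then j - l else if k - l ≤ j ∧ j < k then j + l else j

private lemma sg_invol (k l : ℤ) (hl : 0 ≤ l) (j : ℤ) : sg k l (sg k l j) = j := by
  unfold sg; split_ifs <;> omega

private lemma blockSwap_eq_comp (x : ℤ → ℤ) (k l : ℤ) :
    blockSwap x k l = fun j => x (sg k l j) := by
  funext j; simp only [blockSwap, sg]; split_ifs <;> rfl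

end Aux
open scoped Classical in
private lemma fCD_blockSwap (x : ℤ → ℤ) (hx : IsHeight x) (k l c : ℤ) (hl : 1 ≤ l)
    (hc : ∀ j, k ≤ j → j < k + l → x j = c ∧ x (j - l) = 1 - c) :
    (fCD (blockSwap x k l) : ℤ) = (fCD x : ℤ) + charge (itf x) * (2 * c - 1) * l ^ 2 := by
  obtain ⟨hval, a, b, hab, ⟨N, hN⟩, ⟨M, hM⟩⟩ := hx
  have ha : a = 0 ∨ a = 1 := by have := hval N; rw [hN N le_rfl] at this; exact this
  have hb : b = 0 ∨ b = 1 := by have := hval M; rw [hM M le_rfl] at this; exact this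
  have hcval : c = 0 ∨ c = 1 := by
    have := hval k; rw [(hc k le_rfl (by omega)).1] at this; exact this
  set N₀ : ℤ := min N (k - l - 1) with hN₀def
  set M₀ : ℤ := max M (k + l) with hM₀def
  have hN₀ : ∀ j ≤ N₀, x j = a := fun j hj => hN j (by omega)
  have hM₀ : ∀ j, M₀ ≤ j → x j = b := fun j hj => hM j (by omega)
  have hNM : N₀ ≤ M₀ := by omega
  set x' := blockSwap x k l with hx'def
  have hx'c : x' = fun j => x (sg k l j) := blockSwap_eq_comp x k l
  have hsgout : ∀ j, (j < k - l ∨ k + l ≤ j) → sg k l j = j := by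
    intro j hj; unfold sg; split_ifs <;> omega
  have hN₀' : ∀ j ≤ N₀, x' j = a := by
    intro j hj; rw [hx'c]; simp only
    rw [hsgout j (by omega)]; exact hN₀ j hj
  have hM₀' : ∀ j, M₀ ≤ j → x' j = b := by
    intro j hj; rw [hx'c]; simp only
    rw [hsgout j (by omega)]; exact hM₀ j hj
  have hch : charge (itf x) = b - a := charge_eq_of_tails x a b N₀ M₀ hNM hN₀ hM₀
  have hch' : charge (itf x') = b - a := charge_eq_of_tails x' a b N₀ M₀ hNM hN₀' hM₀'
  have hκ : kappa x = b := by
    unfold kappa; rw [hch]; rcases ha with h1 | h1 <;> rcases hb with h2 | h2 <;> omega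
  have hκ' : kappa x' = b := by
    unfold kappa; rw [hch']; rcases ha with h1 | h1 <;> rcases hb with h2 | h2 <;> omega
  -- block values
  have hBp : ∀ j, k ≤ j → j < k + l → x j = c := fun j h1 h2 => (hc j h1 h2).1
  have hBm : ∀ j, k - l ≤ j → j < k → x j = 1 - c := by
    intro j h1 h2
    have := (hc (j + l) (by omega) (by omega)).2
    rwa [show j + l - l = j by ring] at this
  have hsg1 : ∀ j, k ≤ j → j < k + l → sg k l j = j - l := by
    intro j h1 h2; unfold sg; split_ifs <;> omega
  have hsg2 : ∀ j, k - l ≤ j → j < k → sg k l j = j + l := by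
    intro j h1 h2; unfold sg; split_ifs <;> omega
  have horder : ∀ u v : ℤ, ¬((k - l ≤ u ∧ u < k) ∧ (k ≤ v ∧ v < k + l)) →
      ¬((k ≤ u ∧ u < k + l) ∧ (k - l ≤ v ∧ v < k)) →
      (sg k l u < sg k l v ↔ u < v) := by
    intro u v h1 h2; unfold sg; split_ifs <;> omega
  -- the sets
  set S : Set (ℤ × ℤ) := {p | p.1 < p.2 ∧ x p.1 = b ∧ x p.2 = 1 - b} with hSdef
  set T : Set (ℤ × ℤ) := {p | sg k l p.1 < sg k l p.2 ∧ x p.1 = b ∧ x p.2 = 1 - b} with hTdef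
  set S' : Set (ℤ × ℤ) := {p | p.1 < p.2 ∧ x' p.1 = b ∧ x' p.2 = 1 - b} with hS'def
  have hfx : (fCD x : ℤ) = (S.ncard : ℤ) := by
    have : fCD x = S.ncard := by
      rw [fCD, hκ, ← Nat.card_coe_set_eq]; rfl
    rw [this]
  have hfx' : (fCD x' : ℤ) = (S'.ncard : ℤ) := by
    have : fCD x' = S'.ncard := by
      rw [fCD, hκ', ← Nat.card_coe_set_eq]; rfl
    rw [this]
  have hbne : b ≠ 1 - b := by rcases hb with h | h <;> omega
  have hSfin : S.Finite := by
    apply (Set.finite_Icc ((N₀, N₀) : ℤ × ℤ) (M₀, M₀)).subset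
    rintro ⟨u, v⟩ ⟨h1, h2, h3⟩
    have hu : N₀ < u := by
      by_contra h; push_neg at h; rw [hN₀ u h] at h2
      rcases ha with h' | h' <;> rcases hb with h'' | h'' <;> omega
    have hv : v < M₀ := by
      by_contra h; push_neg at h; rw [hM₀ v h] at h3
      rcases hb with h' | h' <;> omega
    simp only [Set.mem_Icc, Prod.mk_le_mk]
    exact ⟨⟨by omega, by omega⟩, by omega, by omega⟩
  -- the involution on pairs
  set Φ : ℤ × ℤ → ℤ × ℤ := fun p => (sg k l p.1, sg k l p.2) with hΦdef
  have hΦinv : ∀ p, Φ (Φ p) = p := by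
    intro p; simp only [hΦdef, sg_invol k l (by omega : (0:ℤ) ≤ l)]
  have hΦinj : Function.Injective Φ := Function.Involutive.injective hΦinv
  have himg : Φ '' S' = T := by
    ext ⟨u, v⟩
    constructor
    · rintro ⟨⟨p1, p2⟩, ⟨hlt, h1, h2⟩, heq⟩
      rw [hx'c] at h1 h2
      simp only [hΦdef, Prod.mk.injEq] at heq
      obtain ⟨e1, e2⟩ := heq
      refine ⟨?_, ?_, ?_⟩
      · rw [← e1, ← e2, sg_invol k l (by omega), sg_invol k l (by omega)]; exact hlt
      · rw [← e1]; exact h1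
      · rw [← e2]; exact h2
    · rintro ⟨hlt, h1, h2⟩
      refine ⟨(sg k l u, sg k l v), ⟨hlt, ?_, ?_⟩, ?_⟩
      · rw [hx'c]; simp only; rw [sg_invol k l (by omega)]; exact h1
      · rw [hx'c]; simp only; rw [sg_invol k l (by omega)]; exact h2
      · simp only [hΦdef, sg_invol k l (by omega : (0:ℤ) ≤ l)]
  have hS'T : S'.ncard = T.ncard := by
    rw [← himg, Set.ncard_image_of_injective _ hΦinj]
  set X : Set (ℤ × ℤ) := Set.Ico k (k + l) ×ˢ Set.Ico (k - l) k with hXdef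
  set Y : Set (ℤ × ℤ) := Set.Ico (k - l) k ×ˢ Set.Ico k (k + l) with hYdef
  have hXfin : X.Finite := (Set.finite_Ico _ _).prod (Set.finite_Ico _ _)
  have hYfin : Y.Finite := (Set.finite_Ico _ _).prod (Set.finite_Ico _ _)
  have hcard_prod : ∀ (a1 a2 b1 b2 : ℤ),
      ((Set.Ico a1 a2 ×ˢ Set.Ico b1 b2 : Set (ℤ × ℤ)).ncard : ℤ)
        = (a2 - a1).toNat * (b2 - b1).toNat := by
    intro a1 a2 b1 b2
    have : (Set.Ico a1 a2 ×ˢ Set.Ico b1 b2 : Set (ℤ × ℤ))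
        = ↑(Finset.Ico a1 a2 ×ˢ Finset.Ico b1 b2) := by
      rw [Finset.coe_product]; simp
    rw [this, Set.ncard_coe_finset, Finset.card_product, Int.card_Ico, Int.card_Ico]
    push_cast; ring
  have hXcard : (X.ncard : ℤ) = l ^ 2 := by
    rw [hXdef, hcard_prod]
    rw [show k + l - k = l by ring, show k - (k - l) = l by ring]
    rw [Int.toNat_of_nonneg (by omega)]; push_cast [Int.toNat_of_nonneg (show (0:ℤ) ≤ l by omega)]; ring
  have hYcard : (Y.ncard : ℤ) = l ^ 2 := by
    rw [hYdef, hcard_prod]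
    rw [show k + l - k = l by ring, show k - (k - l) = l by ring]
    rw [Int.toNat_of_nonneg (by omega)]; push_cast [Int.toNat_of_nonneg (show (0:ℤ) ≤ l by omega)]; ring
  have hcne : c ≠ 1 - c := by rcases hcval with h | h <;> omega
  rcases (show b = c ∨ b = 1 - c by rcases hb with h | h <;> rcases hcval with h' | h' <;> omega)
    with hbc | hbc
  · -- case κ = c : T = S ∪ X
    have hTSX : T = S ∪ X := by
      ext ⟨u, v⟩
      simp only [hTdef, hSdef, hXdef, Set.mem_setOf_eq, Set.mem_union, Set.mem_prod,
        Set.mem_Ico]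
      constructor
      · rintro ⟨hlt, h1, h2⟩
        have hu' : ¬(k - l ≤ u ∧ u < k) := by
          rintro ⟨hh1, hh2⟩; rw [hBm u hh1 hh2] at h1; omega
        have hv' : ¬(k ≤ v ∧ v < k + l) := by
          rintro ⟨hh1, hh2⟩; rw [hBp v hh1 hh2] at h2; omega
        by_cases hcase : (k ≤ u ∧ u < k + l) ∧ (k - l ≤ v ∧ v < k)
        · exact Or.inr ⟨hcase.1, hcase.2⟩
        · exact Or.inl ⟨(horder u v (fun h => hu' h.1) hcase).mp hlt, h1, h2⟩
      · rintro (⟨hlt, h1, h2⟩ | ⟨hu2, hv2⟩)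
        · have hu' : ¬(k - l ≤ u ∧ u < k) := by
            rintro ⟨hh1, hh2⟩; rw [hBm u hh1 hh2] at h1; omega
          have hcase : ¬((k ≤ u ∧ u < k + l) ∧ (k - l ≤ v ∧ v < k)) := by omega
          exact ⟨(horder u v (fun h => hu' h.1) hcase).mpr hlt, h1, h2⟩
        · refine ⟨?_, ?_, ?_⟩
          · rw [hsg1 u hu2.1 hu2.2, hsg2 v hv2.1 hv2.2]; omega
          · rw [hBp u hu2.1 hu2.2]; omega
          · rw [hBm v hv2.1 hv2.2]; omega
    have hdisj : Disjoint S X := by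
      rw [Set.disjoint_left]
      rintro ⟨u, v⟩ ⟨h1, _, _⟩ ⟨h2, h3⟩
      simp only [Set.mem_Ico] at h2 h3
      omega
    have : T.ncard = S.ncard + X.ncard := by
      rw [hTSX, Set.ncard_union_eq hdisj hSfin hXfin]
    rw [hfx', hS'T, this, hch]
    push_cast
    rw [hfx]
    have : (b - a) * (2 * c - 1) = 1 := by
      rcases ha with h1 | h1 <;> rcases hb with h2 | h2 <;> rcases hcval with h3 | h3 <;>
        subst h1 <;> subst h2 <;> subst h3 <;> omega
    nlinarith [hXcard]
  · -- case κ = 1 - c : S = T ∪ Y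
    have hSTY : S = T ∪ Y := by
      ext ⟨u, v⟩
      simp only [hTdef, hSdef, hYdef, Set.mem_setOf_eq, Set.mem_union, Set.mem_prod,
        Set.mem_Ico]
      constructor
      · rintro ⟨hlt, h1, h2⟩
        have hu' : ¬(k ≤ u ∧ u < k + l) := by
          rintro ⟨hh1, hh2⟩; rw [hBp u hh1 hh2] at h1; omega
        have hv' : ¬(k - l ≤ v ∧ v < k) := by
          rintro ⟨hh1, hh2⟩; rw [hBm v hh1 hh2] at h2; omega
        by_cases hcase : (k - l ≤ u ∧ u < k) ∧ (k ≤ v ∧ v < k + l)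
        · exact Or.inr ⟨hcase.1, hcase.2⟩
        · exact Or.inl ⟨(horder u v hcase (fun h => hu' h.1)).mpr hlt, h1, h2⟩
      · rintro (⟨hlt, h1, h2⟩ | ⟨hu2, hv2⟩)
        · have hu' : ¬(k ≤ u ∧ u < k + l) := by
            rintro ⟨hh1, hh2⟩; rw [hBp u hh1 hh2] at h1; omega
          have hcase : ¬((k - l ≤ u ∧ u < k) ∧ (k ≤ v ∧ v < k + l)) := by
            rintro ⟨hh1, hh2⟩
            rw [hsg2 u hh1.1 hh1.2, hsg1 v hh2.1 hh2.2] at hlt; omega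
          exact ⟨(horder u v hcase (fun h => hu' h.1)).mp hlt, h1, h2⟩
        · refine ⟨?_, ?_, ?_⟩
          · omega
          · rw [hBm u hu2.1 hu2.2]; omega
          · rw [hBp v hv2.1 hv2.2]; omega
    have hTfin : T.Finite := hSfin.subset (by rw [hSTY]; exact Set.subset_union_left)
    have hdisj : Disjoint T Y := by
      rw [Set.disjoint_left]
      rintro ⟨u, v⟩ ⟨h1, _, _⟩ ⟨h2, h3⟩
      simp only [Set.mem_Ico] at h2 h3
      rw [hsg2 u h2.1 h2.2, hsg1 v h3.1 h3.2] at h1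
      omega
    have : S.ncard = T.ncard + Y.ncard := by
      rw [hSTY, Set.ncard_union_eq hdisj hTfin hYfin]
    rw [hfx', hS'T, hch]
    rw [hfx, this]
    push_cast
    have : (b - a) * (2 * c - 1) = -1 := by
      rcases ha with h1 | h1 <;> rcases hb with h2 | h2 <;> rcases hcval with h3 | h3 <;>
        subst h1 <;> subst h2 <;> subst h3 <;> omega
    nlinarith [hYcard]
open scoped Classical in
private lemma fCD_plus (x : ℤ → ℤ) (hx : IsHeight x) (k l : ℤ) (hl : 1 ≤ l)
    (h : PlusEligible x l k) :
    (fCD (blockSwap x k l) : ℝ) - (fCD x : ℝ) = (charge (itf x) : ℝ) * (l : ℝ) ^ 2 := by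
  have hz := fCD_blockSwap x hx k l 1 hl (by
    intro j h1 h2
    obtain ⟨e1, e2⟩ := h j h1 h2
    exact ⟨e1, by rw [e2]; ring⟩)
  have := congrArg (fun z : ℤ => (z : ℝ)) hz
  push_cast at this
  rw [this]; ring

open scoped Classical in
private lemma fCD_minus (x : ℤ → ℤ) (hx : IsHeight x) (k l : ℤ) (hl : 1 ≤ l)
    (h : MinusEligible x l k) :
    (fCD (blockSwap x k l) : ℝ) - (fCD x : ℝ) = -((charge (itf x) : ℝ) * (l : ℝ) ^ 2) := by
  have hz := fCD_blockSwap x hx k l 0 hl (by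
    intro j h1 h2
    obtain ⟨e1, e2⟩ := h j h1 h2
    exact ⟨e1, by rw [e2]; ring⟩)
  have := congrArg (fun z : ℤ => (z : ℝ)) hz
  push_cast at this
  rw [this]; ring

open scoped Classical in
/-- Identity for the `l`-range exclusion contribution, and the resulting bound
for rates bounded by `B̃(l)`. -/
theorem lrange_exclusion_identity
    (x : ℤ → ℤ) (hx : IsHeight x) (l : ℤ) (hl : 2 ≤ l)
    (bpl bml : ℤ → ℝ) (hbpl : ∀ k, 0 ≤ bpl k) (hbml : ∀ k, 0 ≤ bml k) :
    GexL bpl bml x l = (charge (itf x) : ℝ) * (l : ℝ) ^ 2 *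
        ((∑ᶠ k : ℤ, if PlusEligible x l k then bpl k else 0)
          - ∑ᶠ k : ℤ, if MinusEligible x l k then bml k else 0) ∧
    ∀ Btil : ℝ, (∀ k, bpl k ≤ Btil ∧ bml k ≤ Btil) →
      |GexL bpl bml x l| ≤ (l : ℝ) ^ 2 * Btil * (pnum (itf x) : ℝ) := by
  obtain ⟨hval, a, b, hab, ⟨N, hN⟩, ⟨M, hM⟩⟩ := id hx
  have ha : a = 0 ∨ a = 1 := by have := hval N; rw [hN N le_rfl] at this; exact this
  have hb : b = 0 ∨ b = 1 := by have := hval M; rw [hM M le_rfl] at this; exact this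
  set N₀ : ℤ := min N (M - 1) with hN₀def
  have hN₀ : ∀ j ≤ N₀, x j = a := fun j hj => hN j (by omega)
  have hNM : N₀ ≤ M := by omega
  have hch : charge (itf x) = b - a := charge_eq_of_tails x a b N₀ M hNM hN₀ hM
  have hitf_supp : ∀ i, itf x i ≠ 0 → N₀ < i ∧ i ≤ M := by
    intro i hi
    by_contra h
    simp only [itf, ne_eq] at hi
    rcases lt_or_ge N₀ i with h1 | h1
    · have h2 : M < i := by omega
      rw [hM i (by omega), hM (i - 1) (by omega)] at hi; simp at hi
    · rw [hN₀ i h1, hN₀ (i - 1) (by omega)] at hi; simp at hi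
  have hP1 : ∀ k', PlusEligible x l k' → itf x k' = 1 := by
    intro k' h
    have e1 := (h k' le_rfl (by omega)).1
    have e2 := (h (k' + l - 1) (by omega) (by omega)).2
    rw [show k' + l - 1 - l = k' - 1 by ring] at e2
    simp only [itf]; omega
  have hM1 : ∀ k', MinusEligible x l k' → itf x k' = -1 := by
    intro k' h
    have e1 := (h k' le_rfl (by omega)).1
    have e2 := (h (k' + l - 1) (by omega) (by omega)).2
    rw [show k' + l - 1 - l = k' - 1 by ring] at e2
    simp only [itf]; omega
  set F : Finset ℤ := Finset.Ioc N₀ M with hFdef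
  have hmemF : ∀ k', (PlusEligible x l k' ∨ MinusEligible x l k') → k' ∈ F := by
    intro k' h
    have : itf x k' ≠ 0 := by
      rcases h with h | h
      · rw [hP1 k' h]; simp
      · rw [hM1 k' h]; simp
    have := hitf_supp k' this
    simp only [hFdef, Finset.mem_Ioc]; omega
  have hsupP : (Function.support fun k' => if PlusEligible x l k' then bpl k' else 0) ⊆ ↑F := by
    intro k' h
    simp only [Function.mem_support, ne_eq] at h
    by_cases hp : PlusEligible x l k'
    · exact hmemF k' (Or.inl hp)
    · simp [hp] at h
  have hsupM : (Function.support fun k' => if MinusEligible x l k' then bml k' else 0) ⊆ ↑F := by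
    intro k' h
    simp only [Function.mem_support, ne_eq] at h
    by_cases hp : MinusEligible x l k'
    · exact hmemF k' (Or.inr hp)
    · simp [hp] at h
  set G : ℤ → ℝ := fun k' =>
    ((if PlusEligible x l k' then bpl k' else 0)
      + (if MinusEligible x l k' then bml k' else 0))
    * ((fCD (blockSwap x k' l) : ℝ) - (fCD x : ℝ)) with hGdef
  have hGexL : GexL bpl bml x l = ∑ᶠ k', G k' := rfl
  have hsupG : Function.support G ⊆ ↑F := by
    intro k' h
    simp only [Function.mem_support, ne_eq, hGdef] at h
    by_cases hp : PlusEligible x l k'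
    · exact hmemF k' (Or.inl hp)
    · by_cases hm : MinusEligible x l k'
      · exact hmemF k' (Or.inr hm)
      · simp [hp, hm] at h
  have hterm : ∀ k', G k' = (charge (itf x) : ℝ) * (l : ℝ) ^ 2 *
      ((if PlusEligible x l k' then bpl k' else 0)
        - (if MinusEligible x l k' then bml k' else 0)) := by
    intro k'
    by_cases hp : PlusEligible x l k'
    · have hnm : ¬MinusEligible x l k' := by
        intro hm
        have e1 := (hp k' le_rfl (by omega)).1
        have e2 := (hm k' le_rfl (by omega)).1
        omega
      simp only [hGdef, if_pos hp, if_neg hnm]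
      rw [fCD_plus x hx k' l (by omega) hp]; ring
    · by_cases hm : MinusEligible x l k'
      · simp only [hGdef, if_neg hp, if_pos hm]
        rw [fCD_minus x hx k' l (by omega) hm]; ring
      · simp [hGdef, hp, hm]
  have hPsum : (∑ᶠ k' : ℤ, if PlusEligible x l k' then bpl k' else 0)
      = ∑ k' ∈ F, if PlusEligible x l k' then bpl k' else 0 :=
    finsum_eq_sum_of_support_subset _ hsupP
  have hQsum : (∑ᶠ k' : ℤ, if MinusEligible x l k' then bml k' else 0)
      = ∑ k' ∈ F, if MinusEligible x l k' then bml k' else 0 :=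
    finsum_eq_sum_of_support_subset _ hsupM
  have hid : GexL bpl bml x l = (charge (itf x) : ℝ) * (l : ℝ) ^ 2 *
      ((∑ᶠ k : ℤ, if PlusEligible x l k then bpl k else 0)
        - ∑ᶠ k : ℤ, if MinusEligible x l k then bml k else 0) := by
    rw [hGexL, finsum_eq_sum_of_support_subset _ hsupG, hPsum, hQsum]
    rw [Finset.sum_congr rfl (fun k' _ => hterm k'), ← Finset.sum_sub_distrib,
      Finset.mul_sum]
  refine ⟨hid, ?_⟩
  intro Btil hB
  have hBt0 : 0 ≤ Btil := le_trans (hbpl 0) (hB 0).1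
  set EP : Finset ℤ := F.filter (fun k' => PlusEligible x l k') with hEPdef
  set EM : Finset ℤ := F.filter (fun k' => MinusEligible x l k') with hEMdef
  have hPP : (∑ k' ∈ F, if PlusEligible x l k' then bpl k' else 0) = ∑ k' ∈ EP, bpl k' :=
    (Finset.sum_filter _ _).symm
  have hQQ : (∑ k' ∈ F, if MinusEligible x l k' then bml k' else 0) = ∑ k' ∈ EM, bml k' :=
    (Finset.sum_filter _ _).symm
  have hP0 : 0 ≤ ∑ k' ∈ EP, bpl k' := Finset.sum_nonneg fun i _ => hbpl i
  have hQ0 : 0 ≤ ∑ k' ∈ EM, bml k' := Finset.sum_nonneg fun i _ => hbml i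
  have hPB : ∑ k' ∈ EP, bpl k' ≤ Btil * EP.card := by
    calc ∑ k' ∈ EP, bpl k' ≤ ∑ _k' ∈ EP, Btil := Finset.sum_le_sum fun i _ => (hB i).1
    _ = Btil * EP.card := by rw [Finset.sum_const, nsmul_eq_mul]; ring
  have hQB : ∑ k' ∈ EM, bml k' ≤ Btil * EM.card := by
    calc ∑ k' ∈ EM, bml k' ≤ ∑ _k' ∈ EM, Btil := Finset.sum_le_sum fun i _ => (hB i).2
    _ = Btil * EM.card := by rw [Finset.sum_const, nsmul_eq_mul]; ring
  have hdisPM : Disjoint EP EM := by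
    rw [Finset.disjoint_left]
    intro i hiP hiM
    simp only [hEPdef, hEMdef, Finset.mem_filter] at hiP hiM
    have e1 := (hiP.2 i le_rfl (by omega)).1
    have e2 := (hiM.2 i le_rfl (by omega)).1
    omega
  have hcard : ((EP.card : ℤ) + (EM.card : ℤ)) ≤ pnum (itf x) := by
    rw [pnum_eq_sum x a b N₀ M hN₀ hM]
    have hsub : EP ∪ EM ⊆ F :=
      Finset.union_subset (Finset.filter_subset _ _) (Finset.filter_subset _ _)
    calc ((EP.card : ℤ) + (EM.card : ℤ)) = ((EP ∪ EM).card : ℤ) := by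
          rw [Finset.card_union_of_disjoint hdisPM]; push_cast; ring
    _ = ∑ _i ∈ EP ∪ EM, (1 : ℤ) := by simp
    _ ≤ ∑ i ∈ EP ∪ EM, |itf x i| := by
        apply Finset.sum_le_sum
        intro i hi
        rcases Finset.mem_union.mp hi with h | h
        · rw [hP1 i (Finset.mem_filter.mp h).2]; simp
        · rw [hM1 i (Finset.mem_filter.mp h).2]; simp
    _ ≤ ∑ i ∈ F, |itf x i| :=
        Finset.sum_le_sum_of_subset_of_nonneg hsub (fun i _ _ => abs_nonneg _)
  have habs : |(charge (itf x) : ℝ)| = 1 := by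
    rw [hch]
    rcases ha with h1 | h1 <;> rcases hb with h2 | h2 <;> subst h1 <;> subst h2 <;>
      first
        | (exact absurd rfl hab)
        | norm_num
  rw [hid, hPsum, hQsum, hPP, hQQ]
  rw [abs_mul, abs_mul, habs, one_mul, abs_of_nonneg (show (0:ℝ) ≤ (l:ℝ)^2 by positivity)]
  have h1 : |(∑ k' ∈ EP, bpl k') - ∑ k' ∈ EM, bml k'|
      ≤ Btil * ((EP.card : ℝ) + (EM.card : ℝ)) := by
    rw [abs_sub_le_iff]
    constructor <;> nlinarith [mul_nonneg hBt0 (Nat.cast_nonneg (α := ℝ) EP.card),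
      mul_nonneg hBt0 (Nat.cast_nonneg (α := ℝ) EM.card)]
  have h2 : ((EP.card : ℝ) + (EM.card : ℝ)) ≤ (pnum (itf x) : ℝ) := by
    exact_mod_cast hcard
  have hl2 : (0:ℝ) ≤ (l:ℝ)^2 := by positivity
  calc (l:ℝ)^2 * |(∑ k' ∈ EP, bpl k') - ∑ k' ∈ EM, bml k'|
      ≤ (l:ℝ)^2 * (Btil * ((EP.card : ℝ) + (EM.card : ℝ))) :=
        mul_le_mul_of_nonneg_left h1 hl2
    _ ≤ (l:ℝ)^2 * (Btil * (pnum (itf x) : ℝ)) :=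
        mul_le_mul_of_nonneg_left (mul_le_mul_of_nonneg_left h2 hBt0) hl2
    _ = (l:ℝ)^2 * Btil * (pnum (itf x) : ℝ) := by ring
end
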